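/- arXiv:1310.7785 — 5 statements merged into one kernel-verified Lean document; each statement's English description precedes it below -/
import Mathlib

section
/- There exists ω ∈ (0, π] with the following property: for every 0 < α < ω there exists H_α > 0 such that ∫_ℝ (e^{α u²} − 1) dx ≤ H_α ‖u‖²_{L²(ℝ)} for every u ∈ H^{1/2}(ℝ) with [u] ≤ (2π)^{1/2}. -/
open MeasureTheory Real Set Filter Topology

noncomputable section

/-- Integrand of the squared Gagliardo `H^{1/2}` seminorm on `ℝ`. -/
def gagKer (u : ℝ → ℝ) : ℝ × ℝ → ℝ :=
  fun p => (u p.1 - u p.2) ^ 2 / |p.1 - p.2| ^ 2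

/-- Integrand of the Gagliardo inner product `⟨u,v⟩_X`. -/
def innerKer (u v : ℝ → ℝ) : ℝ × ℝ → ℝ :=
  fun p => (u p.1 - u p.2) * (v p.1 - v p.2) / |p.1 - p.2| ^ 2

/-- `u ∈ H^{1/2}(ℝ)` : `u ∈ L²(ℝ)` with finite Gagliardo seminorm. -/
def memH (u : ℝ → ℝ) : Prop :=
  Measurable u ∧ Integrable (fun x => (u x) ^ 2) ∧ Integrable (gagKer u)

/-- Squared Gagliardo seminorm `[u]²`. -/
def gagSq (u : ℝ → ℝ) : ℝ := ∫ p : ℝ × ℝ, gagKer u p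

/-- Gagliardo seminorm `[u]`, i.e. the norm `‖u‖_X`. -/
def gagNorm (u : ℝ → ℝ) : ℝ := Real.sqrt (gagSq u)

/-- Inner product `⟨u, v⟩_X`. -/
def innerX (u v : ℝ → ℝ) : ℝ := ∫ p : ℝ × ℝ, innerKer u v p

/-- `u ∈ X` : `u ∈ H^{1/2}(ℝ)` and `u = 0` a.e. outside `(0,1)`. -/
def memX (u : ℝ → ℝ) : Prop :=
  memH u ∧ ∀ᵐ x : ℝ, x ∉ Ioo (0 : ℝ) 1 → u x = 0

/-- `λ₁ = inf {[u]² : u ∈ X, ‖u‖_{L²(0,1)} = 1}`. -/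
def lam1 : ℝ :=
  sInf { t : ℝ | ∃ u : ℝ → ℝ, memX u ∧ (∫ x in Ioo (0 : ℝ) 1, (u x) ^ 2) = 1 ∧ gagSq u = t }

/-- Trudinger–Moser property with constant `ω`. -/
def TMprop (ω : ℝ) : Prop :=
  ∀ α : ℝ, 0 < α → α < 2 * π * ω →
    ∃ K : ℝ, 0 < K ∧ ∀ u : ℝ → ℝ, memX u → gagNorm u ≤ 1 →
      (∫⁻ x in Ioo (0 : ℝ) 1, ENNReal.ofReal (exp (α * (u x) ^ 2))) ≤ ENNReal.ofReal K

/-- The primitive `F(t) = ∫₀ᵗ f(τ) dτ`. -/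
def primF (f : ℝ → ℝ) : ℝ → ℝ := fun t => ∫ τ in (0 : ℝ)..t, f τ

/-- Hypotheses (H). -/
def HypH (f : ℝ → ℝ) : Prop :=
  Continuous f ∧ f 0 = 0 ∧
  (∃ t₀ > (0 : ℝ), ∃ M > (0 : ℝ),
    ∀ t : ℝ, t₀ ≤ |t| → 0 < primF f t ∧ primF f t ≤ M * |f t|) ∧
  (∀ t : ℝ, t ≠ 0 → 0 < 2 * primF f t ∧ 2 * primF f t ≤ f t * t) ∧
  (Filter.limsup (fun t => primF f t / t ^ 2) (𝓝[≠] (0 : ℝ)) < lam1 / (4 * π)) ∧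
  (∀ α : ℝ, 0 < α →
    Filter.Tendsto (fun t => |f t| * exp (-α * t ^ 2)) (Filter.cocompact ℝ) (𝓝 0))

/-- Hypotheses (H') with Trudinger–Moser constant `ω`. -/
def HypH' (f : ℝ → ℝ) (ω : ℝ) : Prop :=
  Continuous f ∧ f 0 = 0 ∧
  (∃ t₀ > (0 : ℝ), ∃ M > (0 : ℝ),
    ∀ t : ℝ, t₀ ≤ |t| → 0 < primF f t ∧ primF f t ≤ M * |f t|) ∧
  (∀ t : ℝ, t ≠ 0 → 0 < 2 * primF f t ∧ 2 * primF f t ≤ f t * t) ∧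
  (Filter.limsup (fun t => primF f t / t ^ 2) (𝓝[≠] (0 : ℝ)) < lam1 / (4 * π)) ∧
  ∃ α₀ : ℝ, 0 < α₀ ∧ α₀ < 2 * π * ω ∧
    (∀ α : ℝ, 0 < α → α < α₀ →
      Filter.Tendsto (fun t => |f t| * exp (-α * t ^ 2)) (Filter.cocompact ℝ) Filter.atTop) ∧
    (∀ α : ℝ, α₀ < α →
      Filter.Tendsto (fun t => |f t| * exp (-α * t ^ 2)) (Filter.cocompact ℝ) (𝓝 0)) ∧
    ∃ ψ : ℝ → ℝ, memX ψ ∧ gagNorm ψ = 1 ∧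
      ∃ b : ℝ, b < ω / (2 * α₀) ∧ ∀ t : ℝ, 0 < t →
        t ^ 2 / (4 * π) - (∫ x in Ioo (0 : ℝ) 1, primF f (t * ψ x)) ≤ b

/-- `u` is a (weak) solution of `(-Δ)^{1/2} u = f(u)` in `(0,1)`, `u = 0` outside. -/
def IsWeakSolution (f u : ℝ → ℝ) : Prop :=
  memX u ∧ ∀ v : ℝ → ℝ, memX v →
    IntegrableOn (fun x => f (u x) * v x) (Ioo (0 : ℝ) 1) ∧
    innerX u v / (2 * π) = ∫ x in Ioo (0 : ℝ) 1, f (u x) * v x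

/-- The energy functional `φ(u) = ‖u‖_X²/(4π) - ∫₀¹ F(u) dx`. -/
def phi (f u : ℝ → ℝ) : ℝ :=
  gagSq u / (4 * π) - ∫ x in Ioo (0 : ℝ) 1, primF f (u x)

/-- `⟨φ'(u), v⟩ = (1/(2π))⟨u,v⟩_X - ∫₀¹ f(u) v dx`. -/
def phiDeriv (f u v : ℝ → ℝ) : ℝ :=
  innerX u v / (2 * π) - ∫ x in Ioo (0 : ℝ) 1, f (u x) * v x

/-- The Palais–Smale condition at level `c`. -/
def PalaisSmaleAt (f : ℝ → ℝ) (c : ℝ) : Prop :=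
  ∀ u : ℕ → ℝ → ℝ, (∀ n, memX (u n)) →
    Filter.Tendsto (fun n => phi f (u n)) Filter.atTop (𝓝 c) →
    (∃ ε : ℕ → ℝ, Filter.Tendsto ε Filter.atTop (𝓝 0) ∧
      ∀ n, ∀ v : ℝ → ℝ, memX v → gagNorm v ≤ 1 → |phiDeriv f (u n) v| ≤ ε n) →
    ∃ w : ℝ → ℝ, memX w ∧ ∃ g : ℕ → ℕ, StrictMono g ∧
      Filter.Tendsto (fun k => gagNorm (fun x => u (g k) x - w x)) Filter.atTop (𝓝 0)


/-- layer clamp function -/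
def clampf (a d : ℝ) (s : ℝ) : ℝ := min (max (s - a) 0) d

lemma clampf_nonneg {a d s : ℝ} (hd : 0 ≤ d) : 0 ≤ clampf a d s := by
  simp [clampf, le_min_iff, hd, le_max_right]

lemma clampf_mono {a d : ℝ} {s s' : ℝ} (h : s' ≤ s) : clampf a d s' ≤ clampf a d s := by
  unfold clampf
  exact min_le_min (max_le_max (by linarith) le_rfl) le_rfl

lemma clampf_lip {a d : ℝ} {s s' : ℝ} (hd : 0 ≤ d) (h : s' ≤ s) :
    clampf a d s - clampf a d s' ≤ s - s' := by
  unfold clampf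
  rcases le_total (s - a) 0 with h1 | h1
  · have : max (s - a) 0 = 0 := max_eq_right h1
    have h2 : max (s' - a) 0 = 0 := max_eq_right (by linarith)
    rw [this, h2]; linarith
  · rcases le_total (s' - a) 0 with h2 | h2
    · have e2 : max (s' - a) 0 = 0 := max_eq_right h2
      have e1 : max (s - a) 0 = s - a := max_eq_left h1
      rw [e1, e2, min_eq_left hd]
      have := min_le_left (s - a) d
      linarith
    · have e1 : max (s - a) 0 = s - a := max_eq_left h1
      have e2 : max (s' - a) 0 = s' - a := max_eq_left h2
      rw [e1, e2]
      rcases le_total (s - a) d with h3 | h3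
      · rw [min_eq_left h3, min_eq_left (by linarith)]; linarith
      · rcases le_total (s' - a) d with h4 | h4
        · rw [min_eq_right h3, min_eq_left h4]; linarith
        · rw [min_eq_right h3, min_eq_right h4]; linarith

lemma clampf_le {a d s : ℝ} (hd : 0 ≤ d) : clampf a d s ≤ d := min_le_right _ _

lemma clampf_eq_d {a d s : ℝ} (h : a + d ≤ s) (hd : 0 ≤ d) : clampf a d s = d := by
  unfold clampf
  rw [max_eq_left (by linarith), min_eq_right (by linarith)]

lemma clampf_eq_zero {a d s : ℝ} (hd : 0 ≤ d) (h : s ≤ a) : clampf a d s = 0 := by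
  unfold clampf
  rw [max_eq_right (by linarith), min_eq_left hd]

/-- telescoping sum of layer clamps -/
lemma sum_clampf (d : ℝ) (hd : 0 ≤ d) (s : ℝ) (k : ℕ) :
    ∑ j ∈ Finset.range k, clampf (1 + j * d) d s = clampf 1 (k * d) s := by
  induction k with
  | zero => simp [clampf]
  | succ m ih =>
    rw [Finset.sum_range_succ, ih]
    unfold clampf
    push_cast
    rcases le_total s (1 + m * d) with h1 | h1
    · have e2 : max (s - (1 + m * d)) 0 = 0 := max_eq_right (by linarith)
      rw [e2]
      have hmd : (0:ℝ) ≤ m * d := by positivity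
      have : max (s - 1) 0 ≤ m * d := by
        rcases le_total (s-1) 0 with h | h
        · rw [max_eq_right h]; exact hmd
        · rw [max_eq_left h]; linarith
      have h4 : max (s - 1) 0 ≤ (↑m + 1) * d := by nlinarith
      rw [min_eq_left this, min_eq_left h4, min_eq_left hd]
      simp
    · have e1 : max (s - 1) 0 = s - 1 := max_eq_left (by nlinarith [hd, Nat.cast_nonneg (α := ℝ) m])
      have e2 : max (s - (1 + m * d)) 0 = s - (1 + m * d) := max_eq_left (by linarith)
      rw [e1, e2]
      have h2 : min (s - 1) (m * d) = m * d := min_eq_right (by linarith)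
      rw [h2]
      rcases le_total (s - (1 + m*d)) d with h3 | h3
      · rw [min_eq_left h3, min_eq_left (by linarith)]; ring
      · rw [min_eq_right h3, min_eq_right (by linarith)]; ring

/-- sum of squares ≤ square of sum for nonneg -/
lemma sum_sq_le_sq_sum {k : ℕ} (f : ℕ → ℝ) (hf : ∀ j, 0 ≤ f j) :
    ∑ j ∈ Finset.range k, (f j) ^ 2 ≤ (∑ j ∈ Finset.range k, f j) ^ 2 := by
  induction k with
  | zero => simp
  | succ m ih =>
    rw [Finset.sum_range_succ, Finset.sum_range_succ]
    have h1 : 0 ≤ ∑ j ∈ Finset.range m, f j := Finset.sum_nonneg fun j _ => hf j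
    nlinarith [hf m]

/-- the `j`-th layer truncation of `|u|` with width `d` above base level `1`. -/
def layer (u : ℝ → ℝ) (d : ℝ) (j : ℕ) : ℝ → ℝ := fun x => clampf (1 + j * d) d (|u x|)

lemma layer_measurable {u : ℝ → ℝ} (hu : Measurable u) {d : ℝ} {j : ℕ} :
    Measurable (layer u d j) := by
  unfold layer clampf
  exact ((hu.abs.sub measurable_const).max measurable_const).min measurable_const

lemma gagKer_nonneg (u : ℝ → ℝ) (p : ℝ × ℝ) : 0 ≤ gagKer u p := by
  unfold gagKer; positivity

lemma gagKer_measurable {u : ℝ → ℝ} (hu : Measurable u) : Measurable (gagKer u) := by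
  unfold gagKer
  exact ((hu.comp measurable_fst).sub (hu.comp measurable_snd)).pow_const 2
    |>.div (((measurable_fst.sub measurable_snd).abs).pow_const 2)

/-- key pointwise inequality : layers split the Gagliardo kernel. -/
lemma sum_gagKer_layer_le {u : ℝ → ℝ} {d : ℝ} (hd : 0 ≤ d) (k : ℕ) (p : ℝ × ℝ) :
    ∑ j ∈ Finset.range k, gagKer (layer u d j) p ≤ gagKer u p := by
  obtain ⟨x, y⟩ := p
  -- reduce to statement about s = |u x|, s' = |u y| with s' ≤ s
  suffices h : ∀ s s' : ℝ, s' ≤ s →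
      ∑ j ∈ Finset.range k, (clampf (1 + j * d) d s - clampf (1 + j * d) d s') ^ 2
        ≤ (s - s') ^ 2 by
    have key : ∑ j ∈ Finset.range k,
        (layer u d j x - layer u d j y) ^ 2 ≤ (u x - u y) ^ 2 := by
      have habs : (|u x| - |u y|) ^ 2 ≤ (u x - u y) ^ 2 := by
        have h1 : |(|u x| - |u y|)| ≤ |u x - u y| := abs_abs_sub_abs_le_abs_sub _ _
        calc (|u x| - |u y|) ^ 2 = |(|u x| - |u y|)| ^ 2 := by rw [sq_abs]
          _ ≤ |u x - u y| ^ 2 := by exact pow_le_pow_left₀ (abs_nonneg _) h1 2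
          _ = (u x - u y) ^ 2 := by rw [sq_abs]
      rcases le_total (|u y|) (|u x|) with hle | hle
      · calc ∑ j ∈ Finset.range k, (layer u d j x - layer u d j y) ^ 2
            ≤ (|u x| - |u y|) ^ 2 := h _ _ hle
          _ ≤ _ := habs
      · have := h _ _ hle
        calc ∑ j ∈ Finset.range k, (layer u d j x - layer u d j y) ^ 2
            = ∑ j ∈ Finset.range k, (clampf (1 + j*d) d (|u y|) - clampf (1+j*d) d (|u x|)) ^ 2 := by
              apply Finset.sum_congr rfl; intro j _; unfold layer; ring
          _ ≤ (|u y| - |u x|) ^ 2 := this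
          _ = (|u x| - |u y|) ^ 2 := by ring
          _ ≤ _ := habs
    unfold gagKer
    simp only
    rw [← Finset.sum_div]
    rcases eq_or_lt_of_le (abs_nonneg (x - y)) with h0 | h0
    · rw [← h0]; simp
    · exact div_le_div_of_nonneg_right key (by positivity)
  · intro s s' hss
    have hterm : ∀ j : ℕ, 0 ≤ clampf (1 + j * d) d s - clampf (1 + j * d) d s' :=
      fun j => sub_nonneg.2 (clampf_mono hss)
    have h1 : ∑ j ∈ Finset.range k, (clampf (1 + j * d) d s - clampf (1 + j * d) d s') ^ 2
        ≤ (∑ j ∈ Finset.range k, (clampf (1 + j * d) d s - clampf (1 + j * d) d s')) ^ 2 :=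
      sum_sq_le_sq_sum _ hterm
    have h2 : ∑ j ∈ Finset.range k, (clampf (1 + j * d) d s - clampf (1 + j * d) d s')
        = clampf 1 (k * d) s - clampf 1 (k * d) s' := by
      rw [Finset.sum_sub_distrib, sum_clampf d hd, sum_clampf d hd]
    have h3 : clampf 1 (k * d) s - clampf 1 (k * d) s' ≤ s - s' :=
      clampf_lip (by positivity) hss
    have h4 : 0 ≤ clampf 1 (k * d) s - clampf 1 (k * d) s' := sub_nonneg.2 (clampf_mono hss)
    calc _ ≤ _ := h1
      _ ≤ (s - s') ^ 2 := by rw [h2]; nlinarith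

lemma gagKer_layer_le {u : ℝ → ℝ} {d : ℝ} (hd : 0 ≤ d) (j : ℕ) (p : ℝ × ℝ) :
    gagKer (layer u d j) p ≤ gagKer u p := by
  have h := sum_gagKer_layer_le (u := u) hd (j + 1) p
  have h2 : gagKer (layer u d j) p ≤ ∑ i ∈ Finset.range (j+1), gagKer (layer u d i) p :=
    Finset.single_le_sum (f := fun i => gagKer (layer u d i) p)
      (fun i _ => gagKer_nonneg _ _) (Finset.self_mem_range_succ j)
  linarith

lemma integrable_gagKer_layer {u : ℝ → ℝ} (hu : Measurable u)
    (hker : Integrable (gagKer u)) {d : ℝ} (hd : 0 ≤ d) (j : ℕ) :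
    Integrable (gagKer (layer u d j)) := by
  apply hker.mono' (gagKer_measurable (layer_measurable hu)).aestronglyMeasurable
  filter_upwards with p
  rw [Real.norm_eq_abs, abs_of_nonneg (gagKer_nonneg _ _)]
  exact gagKer_layer_le hd j p

lemma sum_gagSq_layer_le {u : ℝ → ℝ} (hu : Measurable u)
    (hker : Integrable (gagKer u)) {d : ℝ} (hd : 0 ≤ d) (k : ℕ) :
    ∑ j ∈ Finset.range k, gagSq (layer u d j) ≤ gagSq u := by
  unfold gagSq
  rw [← integral_finset_sum _ (fun j _ => integrable_gagKer_layer hu hker hd j)]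
  exact integral_mono (integrable_finset_sum _ (fun j _ => integrable_gagKer_layer hu hker hd j))
    hker (fun p => sum_gagKer_layer_le hd k p)

lemma gagSq_layer_nonneg {u : ℝ → ℝ} {d : ℝ} (hd : 0 ≤ d) (j : ℕ) :
    0 ≤ gagSq (layer u d j) :=
  integral_nonneg fun p => gagKer_nonneg _ _

lemma annulus_bound {B : Set ℝ} {m : ℝ} (hm : 0 < m)
    (hBc : volume Bᶜ ≤ ENNReal.ofReal m) (x : ℝ) (c : ℝ) (hc : 0 ≤ c) :
    ENNReal.ofReal (c / (4 * m)) ≤ ∫⁻ y in B, ENNReal.ofReal (c / (x - y) ^ 2) := by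
  set ann : Set ℝ := Icc (x + m) (x + 2*m) ∪ Icc (x - 2*m) (x - m) with hann
  have hannm : MeasurableSet ann := (measurableSet_Icc).union measurableSet_Icc
  have hvol : volume ann = ENNReal.ofReal m + ENNReal.ofReal m := by
    rw [hann, measure_union _ measurableSet_Icc]
    · rw [Real.volume_Icc, Real.volume_Icc]
      congr 1 <;> · congr 1; ring
    · apply Set.disjoint_left.2
      intro y hy1 hy2
      have := hy1.1; have := hy2.2
      linarith
  -- lower bound for the measure of B ∩ ann
  have hBann : ENNReal.ofReal m ≤ volume (B ∩ ann) := by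
    have hsub : ann ⊆ (B ∩ ann) ∪ Bᶜ := by
      intro y hy
      by_cases hyB : y ∈ B
      · exact Or.inl ⟨hyB, hy⟩
      · exact Or.inr hyB
    have h1 : volume ann ≤ volume (B ∩ ann) + volume Bᶜ :=
      le_trans (measure_mono hsub) (measure_union_le _ _)
    have h2 : ENNReal.ofReal m + ENNReal.ofReal m ≤ volume (B ∩ ann) + ENNReal.ofReal m := by
      rw [← hvol]
      exact le_trans h1 (add_le_add le_rfl hBc)
    exact ENNReal.le_of_add_le_add_right ENNReal.ofReal_ne_top h2
  -- pointwise lower bound on the annulus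
  have hpt : ∀ y ∈ B ∩ ann, ENNReal.ofReal (c / (4 * m^2)) ≤ ENNReal.ofReal (c / (x - y) ^ 2) := by
    rintro y ⟨-, hy⟩
    apply ENNReal.ofReal_le_ofReal
    have hq : m^2 ≤ (x - y)^2 ∧ (x - y)^2 ≤ 4 * m^2 := by
      rcases hy with hy | hy
      · have h1 := hy.1; have h2 := hy.2; constructor <;> nlinarith
      · have h1 := hy.1; have h2 := hy.2; constructor <;> nlinarith
    exact div_le_div_of_nonneg_left hc (lt_of_lt_of_le (by positivity) hq.1) hq.2
  calc ENNReal.ofReal (c / (4 * m))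
      = ENNReal.ofReal m * ENNReal.ofReal (c / (4 * m^2)) := by
        rw [← ENNReal.ofReal_mul hm.le]
        congr 1
        field_simp
    _ ≤ volume (B ∩ ann) * ENNReal.ofReal (c / (4 * m^2)) :=
        mul_le_mul_left hBann _
    _ = ∫⁻ _ in B ∩ ann, ENNReal.ofReal (c / (4 * m^2)) := by
        rw [setLIntegral_const, mul_comm]
    _ ≤ ∫⁻ y in B ∩ ann, ENNReal.ofReal (c / (x - y) ^ 2) :=
        setLIntegral_mono (by fun_prop) hpt
    _ ≤ ∫⁻ y in B, ENNReal.ofReal (c / (x - y) ^ 2) :=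
        lintegral_mono_set Set.inter_subset_left

/-- capacity estimate between consecutive levels. -/
lemma capacity {u : ℝ → ℝ} (hu : Measurable u) (hker : Integrable (gagKer u))
    {d : ℝ} (hd : 0 < d) (j : ℕ) {m : ℝ} (hm : 0 < m)
    (hSm : volume {y : ℝ | 1 + j * d < |u y|} ≤ ENNReal.ofReal m) :
    volume {x : ℝ | 1 + (j + 1 : ℕ) * d ≤ |u x|} * ENNReal.ofReal (d ^ 2 / (4 * m)) ≤
      ENNReal.ofReal (gagSq (layer u d j)) := by
  set A : Set ℝ := {x : ℝ | 1 + (j + 1 : ℕ) * d ≤ |u x|} with hA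
  set B : Set ℝ := {y : ℝ | |u y| ≤ 1 + j * d} with hB
  have hAm : MeasurableSet A := measurableSet_le measurable_const hu.abs
  have hBm : MeasurableSet B := measurableSet_le hu.abs measurable_const
  have hBc : volume Bᶜ ≤ ENNReal.ofReal m := by
    have : Bᶜ = {y : ℝ | 1 + j * d < |u y|} := by
      ext y
      simp only [hB, Set.mem_compl_iff, Set.mem_setOf_eq, not_le]
    rw [this]
    exact hSm
  -- value of the kernel on A ×ˢ B
  have hval : ∀ p : ℝ × ℝ, p ∈ A ×ˢ B →
      ENNReal.ofReal (d ^ 2 / (p.1 - p.2) ^ 2) ≤ ENNReal.ofReal (gagKer (layer u d j) p) := by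
    rintro ⟨x, y⟩ ⟨hx, hy⟩
    apply le_of_eq
    congr 1
    have h1 : layer u d j x = d := by
      apply clampf_eq_d _ hd.le
      have hx' : 1 + ((j : ℝ) + 1) * d ≤ |u x| := by
        have := hx
        simp only [hA, Set.mem_setOf_eq] at this
        push_cast at this
        exact this
      linarith
    have h2 : layer u d j y = 0 := clampf_eq_zero hd.le (by simpa [hB] using hy)
    unfold gagKer
    rw [h1, h2, sq_abs]
    ring_nf
  have hmeas : Measurable fun p : ℝ × ℝ => ENNReal.ofReal (gagKer (layer u d j) p) :=
    (gagKer_measurable (layer_measurable hu)).ennreal_ofReal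
  calc volume A * ENNReal.ofReal (d ^ 2 / (4 * m))
      = ∫⁻ _ in A, ENNReal.ofReal (d ^ 2 / (4 * m)) := by rw [setLIntegral_const, mul_comm]
    _ ≤ ∫⁻ x in A, ∫⁻ y in B, ENNReal.ofReal (d ^ 2 / (x - y) ^ 2) :=
        lintegral_mono (fun x => annulus_bound hm hBc x _ (by positivity))
    _ ≤ ∫⁻ x in A, ∫⁻ y in B, ENNReal.ofReal (gagKer (layer u d j) (x, y)) := by
        apply lintegral_mono_ae
        filter_upwards [self_mem_ae_restrict hAm] with x hx
        apply lintegral_mono_ae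
        filter_upwards [self_mem_ae_restrict hBm] with y hy
        exact hval (x, y) ⟨hx, hy⟩
    _ = ∫⁻ p in A ×ˢ B, ENNReal.ofReal (gagKer (layer u d j) p) := by
        rw [MeasureTheory.Measure.volume_eq_prod, ← Measure.prod_restrict,
          lintegral_prod _ hmeas.aemeasurable]
    _ ≤ ∫⁻ p : ℝ × ℝ, ENNReal.ofReal (gagKer (layer u d j) p) :=
        setLIntegral_le_lintegral _ _
    _ = ENNReal.ofReal (gagSq (layer u d j)) := by
        rw [gagSq, ofReal_integral_eq_lintegral_ofReal
          (integrable_gagKer_layer hu hker hd.le j)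
          (Filter.Eventually.of_forall fun p => gagKer_nonneg _ _)]

lemma cheb {u : ℝ → ℝ} (hu : Measurable u) (hL2 : Integrable (fun x => (u x) ^ 2))
    {t : ℝ} (ht : 1 ≤ t) :
    volume {x : ℝ | t ≤ |u x|} ≤ ENNReal.ofReal (∫ x, (u x) ^ 2) := by
  have hS : MeasurableSet {x : ℝ | t ≤ |u x|} := measurableSet_le measurable_const hu.abs
  calc volume {x : ℝ | t ≤ |u x|} = ∫⁻ _ in {x : ℝ | t ≤ |u x|}, 1 := by
        rw [setLIntegral_one]
    _ ≤ ∫⁻ x in {x : ℝ | t ≤ |u x|}, ENNReal.ofReal ((u x) ^ 2) := by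
        apply setLIntegral_mono (by fun_prop)
        intro x hx
        simp only [Set.mem_setOf_eq] at hx
        have : (1:ℝ) ≤ (u x) ^ 2 := by
          have h1 : 1 ≤ |u x| := le_trans ht hx
          nlinarith [sq_abs (u x)]
        exact ENNReal.one_le_ofReal.2 this
    _ ≤ ENNReal.ofReal (∫ x, (u x) ^ 2) := by
        rw [ofReal_integral_eq_lintegral_ofReal hL2
          (Filter.Eventually.of_forall fun x => sq_nonneg _)]
        exact setLIntegral_le_lintegral _ _

lemma tail_chain {u : ℝ → ℝ} (hu : Measurable u) (hL2 : Integrable (fun x => (u x) ^ 2))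
    (hker : Integrable (gagKer u)) (hsem : gagSq u ≤ 2 * π)
    {k : ℕ} (hk : 1 ≤ k) {lam : ℝ} (hlam : 0 < lam) :
    volume {x : ℝ | 1 + lam ≤ |u x|} ≤
      ENNReal.ofReal ((∫ x, (u x) ^ 2) * Real.exp (8 * π * k ^ 2 / lam ^ 2 - k)) := by
  set I2 := ∫ x, (u x) ^ 2 with hI2def
  have hI2 : 0 ≤ I2 := integral_nonneg fun x => sq_nonneg _
  set d : ℝ := lam / k with hd_def
  have hkpos : (0:ℝ) < k := by exact_mod_cast hk
  have hd : 0 < d := div_pos hlam hkpos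
  set ε : ℕ → ℝ := fun j => gagSq (layer u d j) with hε
  have hεnn : ∀ j, 0 ≤ ε j := fun j => gagSq_layer_nonneg hd.le j
  set r : ℕ → ℝ := fun j => 4 * ε j / d ^ 2 with hr
  have hrnn : ∀ j, 0 ≤ r j := fun j => by
    have := hεnn j; positivity
  -- the inductive chain
  have chain : ∀ j : ℕ, j ≤ k →
      volume {x : ℝ | 1 + j * d ≤ |u x|} ≤
        ENNReal.ofReal (I2 * ∏ i ∈ Finset.range j, r i) := by
    intro j hj
    induction j with
    | zero => simpa using cheb hu hL2 le_rfl
    | succ i ih =>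
      have hii : i ≤ k := le_of_lt (Nat.lt_of_succ_le hj)
      have IH := ih hii
      have hPnn : 0 ≤ I2 * ∏ l ∈ Finset.range i, r l :=
        mul_nonneg hI2 (Finset.prod_nonneg fun l _ => hrnn l)
      by_cases h0 : volume {y : ℝ | 1 + i * d < |u y|} = 0
      · have hsub : {x : ℝ | 1 + (i+1 : ℕ) * d ≤ |u x|} ⊆ {y : ℝ | 1 + i * d < |u y|} := by
          intro x hx
          simp only [Set.mem_setOf_eq] at hx ⊢
          push_cast at hx
          nlinarith
        calc volume {x : ℝ | 1 + (i+1 : ℕ) * d ≤ |u x|} ≤ 0 := le_trans (measure_mono hsub) h0.le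
          _ ≤ _ := zero_le
      · -- positive measure case : apply capacity
        have hfin : volume {y : ℝ | 1 + i * d < |u y|} < ⊤ := by
          have hsub : {y : ℝ | 1 + i * d < |u y|} ⊆ {y : ℝ | 1 ≤ |u y|} := by
            intro y hy
            simp only [Set.mem_setOf_eq] at hy ⊢
            nlinarith [Nat.cast_nonneg (α := ℝ) i, hd.le]
          exact lt_of_le_of_lt (le_trans (measure_mono hsub) (cheb hu hL2 le_rfl))
            ENNReal.ofReal_lt_top
        set m : ℝ := (volume {y : ℝ | 1 + i * d < |u y|}).toReal with hm_def
        have hm : 0 < m := ENNReal.toReal_pos h0 hfin.ne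
        have hSm : volume {y : ℝ | 1 + i * d < |u y|} ≤ ENNReal.ofReal m := by
          rw [hm_def, ENNReal.ofReal_toReal hfin.ne]
        have hcap := capacity hu hker hd i hm hSm
        -- divide through
        have hc : (0:ℝ) < d ^ 2 / (4 * m) := by positivity
        have step : volume {x : ℝ | 1 + (i+1 : ℕ) * d ≤ |u x|} ≤
            ENNReal.ofReal (r i * m) := by
          have h1 : ENNReal.ofReal (d ^ 2 / (4 * m)) ≠ 0 := (ENNReal.ofReal_pos.2 hc).ne'
          have hcap2 := (ENNReal.le_div_iff_mul_le (Or.inl h1)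
            (Or.inl ENNReal.ofReal_ne_top)).2 hcap
          refine le_trans hcap2 (le_of_eq ?_)
          rw [← ENNReal.ofReal_div_of_pos hc]
          congr 1
          show gagSq (layer u d i) / (d ^ 2 / (4 * m)) = 4 * gagSq (layer u d i) / d ^ 2 * m
          field_simp
        -- m ≤ I2 * ∏
        have hmle : m ≤ I2 * ∏ l ∈ Finset.range i, r l := by
          have h1 : volume {y : ℝ | 1 + i * d < |u y|} ≤
              ENNReal.ofReal (I2 * ∏ l ∈ Finset.range i, r l) := by
            refine le_trans (measure_mono ?_) IH
            intro y hy
            simp only [Set.mem_setOf_eq] at hy ⊢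
            exact le_of_lt hy
          calc m ≤ (ENNReal.ofReal (I2 * ∏ l ∈ Finset.range i, r l)).toReal :=
                ENNReal.toReal_mono ENNReal.ofReal_ne_top h1
            _ = I2 * ∏ l ∈ Finset.range i, r l := ENNReal.toReal_ofReal hPnn
        calc volume {x : ℝ | 1 + (i+1 : ℕ) * d ≤ |u x|} ≤ ENNReal.ofReal (r i * m) := step
          _ ≤ ENNReal.ofReal (r i * (I2 * ∏ l ∈ Finset.range i, r l)) :=
              ENNReal.ofReal_le_ofReal (mul_le_mul_of_nonneg_left hmle (hrnn i))
          _ = ENNReal.ofReal (I2 * ∏ l ∈ Finset.range (i+1), r l) := by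
              rw [Finset.prod_range_succ]
              congr 1
              ring
  -- bound the product
  have hprod : ∏ i ∈ Finset.range k, r i ≤ Real.exp (8 * π * k ^ 2 / lam ^ 2 - k) := by
    have h1 : ∏ i ∈ Finset.range k, r i ≤ ∏ i ∈ Finset.range k, Real.exp (r i - 1) :=
      Finset.prod_le_prod (fun i _ => hrnn i)
        (fun i _ => by linarith [Real.add_one_le_exp (r i - 1)])
    have h2 : ∏ i ∈ Finset.range k, Real.exp (r i - 1) =
        Real.exp (∑ i ∈ Finset.range k, (r i - 1)) := by
      rw [Real.exp_sum]
    have h3 : ∑ i ∈ Finset.range k, (r i - 1) ≤ 8 * π * k ^ 2 / lam ^ 2 - k := by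
      rw [Finset.sum_sub_distrib]
      simp only [Finset.sum_const, Finset.card_range, nsmul_eq_mul, mul_one]
      have h4 : ∑ i ∈ Finset.range k, r i ≤ 8 * π / d ^ 2 := by
        have h5 : ∑ i ∈ Finset.range k, ε i ≤ 2 * π :=
          le_trans (sum_gagSq_layer_le hu hker hd.le k) hsem
        have : ∑ i ∈ Finset.range k, r i = (4 / d ^ 2) * ∑ i ∈ Finset.range k, ε i := by
          rw [Finset.mul_sum]
          apply Finset.sum_congr rfl
          intro i _
          rw [hr]
          ring
        rw [this]
        rw [div_mul_eq_mul_div, div_le_div_iff₀ (by positivity) (by positivity)]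
        nlinarith [sq_nonneg d]
      have h6 : 8 * π / d ^ 2 = 8 * π * k ^ 2 / lam ^ 2 := by
        rw [hd_def]
        field_simp
      linarith
    calc _ ≤ _ := h1
      _ = _ := h2
      _ ≤ _ := Real.exp_le_exp.2 h3
  have hset : {x : ℝ | 1 + lam ≤ |u x|} = {x : ℝ | 1 + (k : ℕ) * d ≤ |u x|} := by
    have : (k : ℝ) * d = lam := by
      rw [hd_def]
      field_simp
    rw [this]
  rw [hset]
  exact le_trans (chain k le_rfl)
    (ENNReal.ofReal_le_ofReal (mul_le_mul_of_nonneg_left hprod hI2))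

lemma tail_gauss {u : ℝ → ℝ} (hu : Measurable u) (hL2 : Integrable (fun x => (u x) ^ 2))
    (hker : Integrable (gagKer u)) (hsem : gagSq u ≤ 2 * π)
    {n : ℕ} (hn : 12 ≤ n) :
    volume {x : ℝ | (n : ℝ) ≤ |u x|} ≤
      ENNReal.ofReal ((∫ x, (u x) ^ 2) * Real.exp (-((n : ℝ) - 1) ^ 2 / (64 * π))) := by
  have hπ : (3 : ℝ) < π := Real.pi_gt_three
  have hπ' : π < 3.15 := Real.pi_lt_d2
  have hI2 : 0 ≤ ∫ x, (u x) ^ 2 := integral_nonneg fun x => sq_nonneg _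
  set lam : ℝ := (n : ℝ) - 1 with hlam_def
  have hn' : (12 : ℝ) ≤ (n : ℝ) := by exact_mod_cast hn
  have hlam11 : 11 ≤ lam := by rw [hlam_def]; linarith
  have hlam : 0 < lam := by linarith
  set k : ℕ := ⌈lam ^ 2 / (16 * π)⌉₊ with hk_def
  have hkpos : 1 ≤ k := by
    have : 0 < k := by
      rw [hk_def]
      exact Nat.ceil_pos.mpr (by positivity)
    omega
  have hKl : lam ^ 2 / (16 * π) ≤ (k : ℝ) := Nat.le_ceil _
  have hKu : (k : ℝ) < lam ^ 2 / (16 * π) + 1 := by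
    rw [hk_def]
    exact Nat.ceil_lt_add_one (by positivity)
  have hset : {x : ℝ | (n : ℝ) ≤ |u x|} = {x : ℝ | 1 + lam ≤ |u x|} := by
    have : 1 + lam = (n : ℝ) := by rw [hlam_def]; ring
    rw [this]
  rw [hset]
  refine le_trans (tail_chain hu hL2 hker hsem hkpos hlam)
    (ENNReal.ofReal_le_ofReal (mul_le_mul_of_nonneg_left (Real.exp_le_exp.2 ?_) hI2))
  -- 8 π k² / lam² - k ≤ - lam² / (64 π)
  set K : ℝ := (k : ℝ) with hK_def
  have hK0 : 0 < K := by
    rw [hK_def]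
    exact_mod_cast hkpos
  have hL2pos : 0 < lam ^ 2 := by positivity
  have h32 : 32 * π ≤ lam ^ 2 := by nlinarith
  have hdm : lam ^ 2 / (16 * π) * (16 * π) = lam ^ 2 :=
    div_mul_cancel₀ _ (by positivity)
  have hKu2 : 32 * π * K ≤ 3 * lam ^ 2 := by
    nlinarith [mul_lt_mul_of_pos_right hKu (show (0:ℝ) < 32 * π by positivity)]
  have hA : 8 * π * K ^ 2 / lam ^ 2 ≤ (3 / 4) * K := by
    rw [div_le_iff₀ hL2pos]
    have hKK : 32 * π * K * K ≤ 3 * lam ^ 2 * K := mul_le_mul_of_nonneg_right hKu2 hK0.le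
    clear_value K k lam
    nlinarith [hKK]
  have hB : lam ^ 2 / (64 * π) ≤ K / 4 := by
    rw [div_le_div_iff₀ (by positivity) (by norm_num)]
    nlinarith [mul_le_mul_of_nonneg_right hKl (show (0:ℝ) ≤ 16 * π by positivity)]
  have : -lam ^ 2 / (64 * π) = -(lam ^ 2 / (64 * π)) := by ring
  rw [this]
  linarith

lemma exp_sub_one_le (s c : ℝ) (h0 : 0 ≤ s) (hsc : s ≤ c) :
    Real.exp s - 1 ≤ s * Real.exp c := by
  have h := Real.add_one_le_exp (-s)
  have hmul := mul_le_mul_of_nonneg_right h (Real.exp_pos s).le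
  have hone : Real.exp (-s) * Real.exp s = 1 := by
    rw [← Real.exp_add]
    simp
  have hec : Real.exp s ≤ Real.exp c := Real.exp_le_exp.2 hsc
  nlinarith [Real.exp_pos s, mul_le_mul_of_nonneg_left hec h0]


/-- Ozawa's fractional Trudinger–Moser inequality (Theorem 2.1).
Note `[u] ≤ √(2π)` is equivalent to `‖(-Δ)^{1/4} u‖_{L²(ℝ)} ≤ 1`. -/
theorem statement4 :
    ∃ ω : ℝ, 0 < ω ∧ ω ≤ π ∧ ∀ α : ℝ, 0 < α → α < ω →
      ∃ H : ℝ, 0 < H ∧ ∀ u : ℝ → ℝ, memH u → gagNorm u ≤ Real.sqrt (2 * π) →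
        (∫⁻ x : ℝ, ENNReal.ofReal (exp (α * (u x) ^ 2) - 1)) ≤
          ENNReal.ofReal (H * ∫ x : ℝ, (u x) ^ 2) := by
  have hπ : (3 : ℝ) < π := Real.pi_gt_three
  have hπ' : π < 3.15 := Real.pi_lt_d2
  refine ⟨1 / (256 * π), by positivity, ?_, ?_⟩
  · rw [div_le_iff₀ (by positivity)]
    nlinarith
  intro α hα hαω
  set q : ℝ := Real.exp (-(11 / (128 * π))) with hq_def
  have hq0 : 0 < q := Real.exp_pos _
  have hq1 : q < 1 := by
    rw [hq_def]
    apply Real.exp_lt_one_iff.2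
    have : (0:ℝ) < 11 / (128 * π) := by positivity
    linarith
  set H : ℝ := α * Real.exp (144 * α) + (1 - q)⁻¹ with hH_def
  have hH : 0 < H := by
    have h1 : 0 < α * Real.exp (144 * α) := by positivity
    have h2 : (0:ℝ) < (1 - q)⁻¹ := by
      apply inv_pos.2
      linarith
    rw [hH_def]
    linarith
  refine ⟨H, hH, ?_⟩
  rintro u ⟨hu, hL2, hker⟩ hnorm
  set I2 : ℝ := ∫ x, (u x) ^ 2 with hI2_def
  have hI2 : 0 ≤ I2 := integral_nonneg fun x => sq_nonneg _
  -- seminorm bound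
  have hg0 : 0 ≤ gagSq u := integral_nonneg fun p => gagKer_nonneg u p
  have hsem : gagSq u ≤ 2 * π := by
    have h1 : gagSq u = (Real.sqrt (gagSq u)) ^ 2 := (Real.sq_sqrt hg0).symm
    have h2 : (Real.sqrt (gagSq u)) ^ 2 ≤ (Real.sqrt (2 * π)) ^ 2 :=
      pow_le_pow_left₀ (Real.sqrt_nonneg _) hnorm 2
    have h3 : (Real.sqrt (2 * π)) ^ 2 = 2 * π := Real.sq_sqrt (by positivity)
    linarith [h1 ▸ h2.trans_eq h3]
  -- sets
  set f : ℝ → ENNReal := fun x => ENNReal.ofReal (Real.exp (α * (u x) ^ 2) - 1) with hf_def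
  set E' : Set ℝ := {x : ℝ | |u x| < 12} with hE'_def
  set E : ℕ → Set ℝ := fun m => {x : ℝ | ((m : ℝ) + 12) ≤ |u x| ∧ |u x| < (m : ℝ) + 13} with hE_def
  have hcover : (Set.univ : Set ℝ) ⊆ E' ∪ ⋃ m, E m := by
    intro x _
    by_cases hx : |u x| < 12
    · exact Or.inl hx
    · push_neg at hx
      refine Or.inr (Set.mem_iUnion.2 ⟨⌊|u x|⌋₊ - 12, ?_, ?_⟩)
      · have h1 : (12:ℕ) ≤ ⌊|u x|⌋₊ := Nat.le_floor (by exact_mod_cast hx)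
        have h2 : ((⌊|u x|⌋₊ - 12 : ℕ) : ℝ) = (⌊|u x|⌋₊ : ℝ) - 12 := by
          push_cast [Nat.cast_sub h1]
          ring
        rw [h2]
        have := Nat.floor_le (abs_nonneg (u x))
        linarith
      · have h1 : (12:ℕ) ≤ ⌊|u x|⌋₊ := Nat.le_floor (by exact_mod_cast hx)
        have h2 : ((⌊|u x|⌋₊ - 12 : ℕ) : ℝ) = (⌊|u x|⌋₊ : ℝ) - 12 := by
          push_cast [Nat.cast_sub h1]
          ring
        rw [h2]
        have := Nat.lt_floor_add_one (|u x|)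
        linarith
  clear_value q H I2 f E' E
  -- small part
  have hsmall : ∫⁻ x in E', f x ≤ ENNReal.ofReal (α * Real.exp (144 * α) * I2) := by
    have hc : Integrable (fun x => α * Real.exp (144 * α) * (u x) ^ 2) := hL2.const_mul _
    calc ∫⁻ x in E', f x
        ≤ ∫⁻ x in E', ENNReal.ofReal (α * Real.exp (144 * α) * (u x) ^ 2) := by
          apply setLIntegral_mono (by fun_prop)
          intro x hx
          simp only [hE'_def, Set.mem_setOf_eq] at hx
          simp only [hf_def]
          apply ENNReal.ofReal_le_ofReal
          have h144 : (u x) ^ 2 ≤ 144 := by nlinarith [sq_abs (u x), abs_nonneg (u x)]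
          have hs : α * (u x) ^ 2 ≤ 144 * α := by nlinarith [mul_le_mul_of_nonneg_left h144 hα.le]
          have hs0 : 0 ≤ α * (u x) ^ 2 := by positivity
          have key := exp_sub_one_le (α * (u x) ^ 2) (144 * α) hs0 hs
          nlinarith [key]
        _ ≤ ∫⁻ x, ENNReal.ofReal (α * Real.exp (144 * α) * (u x) ^ 2) :=
          setLIntegral_le_lintegral _ _
        _ = ENNReal.ofReal (∫ x, α * Real.exp (144 * α) * (u x) ^ 2) := by
          rw [ofReal_integral_eq_lintegral_ofReal hc
            (Filter.Eventually.of_forall fun x => by positivity)]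
        _ = ENNReal.ofReal (α * Real.exp (144 * α) * I2) := by
          rw [integral_const_mul, ← hI2_def]
  -- tail parts
  have htail : ∀ m : ℕ, ∫⁻ x in E m, f x ≤ ENNReal.ofReal I2 * (ENNReal.ofReal q) ^ m := by
    intro m
    have hn : 12 ≤ m + 12 := by omega
    have htg := tail_gauss hu hL2 hker hsem hn
    have hcast : (((m + 12 : ℕ)) : ℝ) = (m : ℝ) + 12 := by push_cast; ring
    have hvol : volume (E m) ≤ ENNReal.ofReal (I2 * Real.exp (-((m:ℝ) + 11) ^ 2 / (64 * π))) := by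
      have he : (-((((m + 12 : ℕ)) : ℝ) - 1) ^ 2 / (64 * π)) = (-((m:ℝ) + 11) ^ 2 / (64 * π)) := by
        push_cast
        ring
      rw [he, ← hI2_def] at htg
      refine le_trans (measure_mono ?_) htg
      intro x hx
      simp only [hE_def, Set.mem_setOf_eq] at hx ⊢
      rw [hcast]
      exact hx.1
    calc ∫⁻ x in E m, f x
        ≤ ∫⁻ _ in E m, ENNReal.ofReal (Real.exp (α * ((m:ℝ) + 13) ^ 2)) := by
          apply setLIntegral_mono measurable_const
          intro x hx
          simp only [hE_def, Set.mem_setOf_eq] at hx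
          simp only [hf_def]
          apply ENNReal.ofReal_le_ofReal
          have h1 : (u x) ^ 2 ≤ ((m:ℝ) + 13) ^ 2 := by
            nlinarith [sq_abs (u x), abs_nonneg (u x), hx.1, hx.2]
          have h2 : α * (u x) ^ 2 ≤ α * ((m:ℝ) + 13) ^ 2 :=
            mul_le_mul_of_nonneg_left h1 hα.le
          have := Real.exp_le_exp.2 h2
          linarith
        _ = volume (E m) * ENNReal.ofReal (Real.exp (α * ((m:ℝ) + 13) ^ 2)) := by
          rw [setLIntegral_const, mul_comm]
        _ ≤ ENNReal.ofReal (I2 * Real.exp (-((m:ℝ) + 11) ^ 2 / (64 * π))) *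
              ENNReal.ofReal (Real.exp (α * ((m:ℝ) + 13) ^ 2)) :=
          mul_le_mul_left hvol _
        _ ≤ ENNReal.ofReal I2 * (ENNReal.ofReal q) ^ m := by
          rw [← ENNReal.ofReal_mul (mul_nonneg hI2 (Real.exp_pos _).le), ← ENNReal.ofReal_pow hq0.le,
            ← ENNReal.ofReal_mul hI2]
          apply ENNReal.ofReal_le_ofReal
          rw [mul_assoc]
          apply mul_le_mul_of_nonneg_left _ hI2
          rw [← Real.exp_add, hq_def, ← Real.exp_nat_mul]
          apply Real.exp_le_exp.2
          -- numeric inequality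
          have hm0 : (0:ℝ) ≤ (m : ℝ) := Nat.cast_nonneg m
          have h1 : α * ((m:ℝ) + 13) ^ 2 ≤ ((m:ℝ) + 11) ^ 2 / (128 * π) := by
            have h2 : ((m:ℝ) + 13) ^ 2 ≤ 2 * ((m:ℝ) + 11) ^ 2 := by nlinarith
            have h3 : α * ((m:ℝ) + 13) ^ 2 ≤ (1 / (256 * π)) * (2 * ((m:ℝ) + 11) ^ 2) := by
              apply mul_le_mul (le_of_lt hαω) h2 (by positivity) (by positivity)
            calc α * ((m:ℝ) + 13) ^ 2 ≤ (1 / (256 * π)) * (2 * ((m:ℝ) + 11) ^ 2) := h3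
              _ = ((m:ℝ) + 11) ^ 2 / (128 * π) := by ring
          have h6 : (11 * (m:ℝ)) / (128 * π) ≤ ((m:ℝ) + 11) ^ 2 / (128 * π) :=
            (div_le_div_iff_of_pos_right (by positivity)).2 (by nlinarith)
          have h4 : -((m:ℝ) + 11) ^ 2 / (64 * π) =
              -(2 * (((m:ℝ) + 11) ^ 2 / (128 * π))) := by ring
          have h7 : (m:ℝ) * (-(11 / (128 * π))) = -((11 * (m:ℝ)) / (128 * π)) := by ring
          rw [h4, h7]
          linarith [h1, h6]
  -- assemble
  calc ∫⁻ x, f x = ∫⁻ x in Set.univ, f x := (setLIntegral_univ f).symm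
    _ ≤ ∫⁻ x in E' ∪ ⋃ m, E m, f x := lintegral_mono_set hcover
    _ ≤ (∫⁻ x in E', f x) + ∫⁻ x in ⋃ m, E m, f x := lintegral_union_le _ _ _
    _ ≤ (∫⁻ x in E', f x) + ∑' m, ∫⁻ x in E m, f x := by
        exact add_le_add le_rfl (lintegral_iUnion_le _ _)
    _ ≤ ENNReal.ofReal (α * Real.exp (144 * α) * I2) +
          ∑' m, ENNReal.ofReal I2 * (ENNReal.ofReal q) ^ m := by
        exact add_le_add hsmall (ENNReal.tsum_le_tsum htail)
    _ = ENNReal.ofReal (α * Real.exp (144 * α) * I2) +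
          ENNReal.ofReal I2 * (1 - ENNReal.ofReal q)⁻¹ := by
        rw [ENNReal.tsum_mul_left, ENNReal.tsum_geometric]
    _ ≤ ENNReal.ofReal (H * I2) := by
        have h1 : (1 - ENNReal.ofReal q)⁻¹ = ENNReal.ofReal ((1 - q)⁻¹) := by
          rw [← ENNReal.ofReal_one, ← ENNReal.ofReal_sub _ hq0.le,
            ← ENNReal.ofReal_inv_of_pos (by linarith)]
        rw [h1, ← ENNReal.ofReal_mul hI2]
        rw [← ENNReal.ofReal_add (mul_nonneg (by positivity) hI2)
          (mul_nonneg hI2 (inv_nonneg.2 (by linarith)))]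
        apply ENNReal.ofReal_le_ofReal
        rw [hH_def]
        have h2 : α * Real.exp (144 * α) * I2 + I2 * (1 - q)⁻¹ =
            (α * Real.exp (144 * α) + (1 - q)⁻¹) * I2 := by ring
        linarith [h2.le]
end
end

section
/- Let ω ∈ (0,π] and suppose that for some 0 < α < 2πω there exists H > 0 such that ∫_ℝ (e^{(α/(2π)) v²} − 1) dx ≤ H ‖v‖²_{L²(ℝ)} for every v ∈ H^{1/2}(ℝ) with [v] ≤ (2π)^{1/2}. Then for all u ∈ X with ‖u‖_X ≤ 1 one has ∫₀¹ e^{α u²} dx ≤ 2πH/λ₁ + 1. -/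
open MeasureTheory Real Set Filter Topology

noncomputable section

lemma gagSq_nonneg (u : ℝ → ℝ) : 0 ≤ gagSq u :=
  integral_nonneg (gagKer_nonneg u)

lemma gagKer_smul (c : ℝ) (u : ℝ → ℝ) :
    gagKer (fun x => c * u x) = fun p => c ^ 2 * gagKer u p := by
  funext p
  simp only [gagKer]
  have h : (c * u p.1 - c * u p.2) ^ 2 = c ^ 2 * (u p.1 - u p.2) ^ 2 := by ring
  rw [h, mul_div_assoc]

lemma gagSq_smul (c : ℝ) (u : ℝ → ℝ) :
    gagSq (fun x => c * u x) = c ^ 2 * gagSq u := by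
  rw [gagSq, gagKer_smul, gagSq, MeasureTheory.integral_const_mul]

lemma poincare (u : ℝ → ℝ) (hu : memX u) :
    (∫ x in Ioo (0 : ℝ) 1, u x ^ 2) ≤ 9 * gagSq u := by
  obtain ⟨⟨hmeas, hL2, hker⟩, hzero⟩ := hu
  have hnn : ∀ p, 0 ≤ gagKer u p := gagKer_nonneg u
  have h1 : ENNReal.ofReal (gagSq u) = ∫⁻ p, ENNReal.ofReal (gagKer u p) :=
    ofReal_integral_eq_lintegral_ofReal hker (ae_of_all _ hnn)
  have h2 : ENNReal.ofReal (∫ x in Ioo (0:ℝ) 1, u x ^ 2)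
      = ∫⁻ x in Ioo (0:ℝ) 1, ENNReal.ofReal (u x ^ 2) :=
    ofReal_integral_eq_lintegral_ofReal hL2.integrableOn (ae_of_all _ fun x => sq_nonneg _)
  set S : Set (ℝ × ℝ) := (Ioo (0:ℝ) 1) ×ˢ (Ioo (2:ℝ) 3) with hS
  have hSm : MeasurableSet S := measurableSet_Ioo.prod measurableSet_Ioo
  -- product integral of function of first coordinate over S
  have hprod : (∫⁻ p in S, ENNReal.ofReal (u p.1 ^ 2))
      = ∫⁻ x in Ioo (0:ℝ) 1, ENNReal.ofReal (u x ^ 2) := by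
    rw [hS, Measure.volume_eq_prod, ← Measure.prod_restrict]
    have hm : Measurable (fun p : ℝ × ℝ => ENNReal.ofReal (u p.1 ^ 2)) :=
      ENNReal.measurable_ofReal.comp ((hmeas.comp measurable_fst).pow_const 2)
    rw [MeasureTheory.lintegral_prod _ hm.aemeasurable]
    norm_num [lintegral_const, Real.volume_Ioo]
  -- pointwise bound a.e. on S
  have hz2 : ∀ᵐ p : ℝ × ℝ ∂((volume : Measure (ℝ×ℝ)).restrict S),
      ENNReal.ofReal (u p.1 ^ 2) ≤ ENNReal.ofReal (9 * gagKer u p) := by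
    have hsnd : ∀ᵐ p : ℝ × ℝ, p.2 ∉ Ioo (0:ℝ) 1 → u p.2 = 0 :=
      Measure.quasiMeasurePreserving_snd.ae hzero
    filter_upwards [ae_restrict_of_ae hsnd, ae_restrict_mem hSm] with p hp hpS
    obtain ⟨hp1, hp2⟩ := hpS
    have hu2 : u p.2 = 0 := hp (by simp [Ioo]; intro h; linarith [hp2.1])
    have habs : |p.1 - p.2| ≤ 3 := by
      rw [abs_sub_comm, abs_of_nonneg (by linarith [hp1.2, hp2.1])]
      linarith [hp1.1, hp2.2]
    have habs2 : (1:ℝ) ≤ |p.1 - p.2| := by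
      rw [abs_sub_comm, abs_of_nonneg (by linarith [hp1.2, hp2.1])]
      linarith [hp1.2, hp2.1]
    apply ENNReal.ofReal_le_ofReal
    have : gagKer u p = u p.1 ^ 2 / |p.1 - p.2| ^ 2 := by
      simp [gagKer, hu2]
    rw [this]
    have hd0 : (0:ℝ) < |p.1 - p.2| ^ 2 := by positivity
    have hd9 : |p.1 - p.2| ^ 2 ≤ 9 := by nlinarith [abs_nonneg (p.1 - p.2)]
    rw [mul_comm, div_mul_eq_mul_div, le_div_iff₀ hd0]
    nlinarith [sq_nonneg (u p.1)]
  have main : (∫⁻ x in Ioo (0:ℝ) 1, ENNReal.ofReal (u x ^ 2))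
      ≤ ENNReal.ofReal (9 * gagSq u) := by
    rw [← hprod]
    calc (∫⁻ p in S, ENNReal.ofReal (u p.1 ^ 2))
        ≤ ∫⁻ p in S, ENNReal.ofReal (9 * gagKer u p) := lintegral_mono_ae hz2
      _ ≤ ∫⁻ p, ENNReal.ofReal (9 * gagKer u p) := setLIntegral_le_lintegral _ _
      _ = ∫⁻ p, ENNReal.ofReal 9 * ENNReal.ofReal (gagKer u p) := by
          congr 1; funext p; rw [ENNReal.ofReal_mul (by norm_num)]
      _ = ENNReal.ofReal 9 * ∫⁻ p, ENNReal.ofReal (gagKer u p) :=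
          lintegral_const_mul' _ _ ENNReal.ofReal_ne_top
      _ = ENNReal.ofReal (9 * gagSq u) := by
          rw [← h1, ENNReal.ofReal_mul (by norm_num)]
  rw [← h2] at main
  exact (ENNReal.ofReal_le_ofReal_iff (by nlinarith [gagSq_nonneg u])).mp main

/-- Trudinger–Moser inequality on `X` (Corollary 2.4). -/
theorem statement7 (ω : ℝ) (hω0 : 0 < ω) (hωπ : ω ≤ π)
    (α : ℝ) (hα0 : 0 < α) (hα : α < 2 * π * ω)
    (H : ℝ) (hH0 : 0 < H)
    (hOzawa : ∀ v : ℝ → ℝ, memH v → gagNorm v ≤ Real.sqrt (2 * π) →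
      (∫⁻ x : ℝ, ENNReal.ofReal (exp ((α / (2 * π)) * (v x) ^ 2) - 1)) ≤
        ENNReal.ofReal (H * ∫ x : ℝ, (v x) ^ 2)) :
    ∀ u : ℝ → ℝ, memX u → gagNorm u ≤ 1 →
      (∫⁻ x in Ioo (0 : ℝ) 1, ENNReal.ofReal (exp (α * (u x) ^ 2))) ≤
        ENNReal.ofReal (2 * π * H / lam1 + 1) := by
  intro u hu hnorm
  have h2π : (0:ℝ) < 2 * π := by positivity
  obtain ⟨⟨hmeas, hL2, hker⟩, hzero⟩ := hu
  set I : ℝ := ∫ x in Ioo (0:ℝ) 1, u x ^ 2 with hIdef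
  have hI_nonneg : 0 ≤ I := integral_nonneg fun x => sq_nonneg _
  -- integral over ℝ equals integral over (0,1)
  have hcompl : (∫ x in (Ioo (0:ℝ) 1)ᶜ, u x ^ 2) = 0 := by
    apply integral_eq_zero_of_ae
    filter_upwards [ae_restrict_of_ae hzero, ae_restrict_mem measurableSet_Ioo.compl]
      with x hx hxc
    simp [hx hxc]
  have hIR : (∫ x : ℝ, u x ^ 2) = I := by
    rw [← integral_add_compl measurableSet_Ioo hL2, hcompl, add_zero]
  -- gagSq u ≤ 1
  have hgag1 : gagSq u ≤ 1 := by
    unfold gagNorm at hnorm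
    nlinarith [Real.sq_sqrt (gagSq_nonneg u), Real.sqrt_nonneg (gagSq u)]
  -- lam1 facts
  have hlam_nonneg : 0 ≤ lam1 := by
    apply Real.sInf_nonneg
    rintro t ⟨w, hw, hwn, rfl⟩
    exact gagSq_nonneg w
  have hkey : H * (2 * π * I) ≤ 2 * π * H / lam1 := by
    rcases eq_or_lt_of_le hI_nonneg with h0 | hpos
    · rw [← h0]
      simpa using div_nonneg (by positivity : (0:ℝ) ≤ 2 * π * H) hlam_nonneg
    · set c : ℝ := (Real.sqrt I)⁻¹ with hcdef
      have hc2 : c ^ 2 = I⁻¹ := by rw [hcdef, inv_pow, Real.sq_sqrt hI_nonneg]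
      have hscaleX : memX (fun x => c * u x) := by
        refine ⟨⟨measurable_const.mul hmeas, ?_, ?_⟩, ?_⟩
        · have : (fun x => (c * u x) ^ 2) = fun x => c ^ 2 * u x ^ 2 := by
            funext x; ring
          rw [this]; exact hL2.const_mul _
        · rw [gagKer_smul]; exact hker.const_mul _
        · filter_upwards [hzero] with x hx hxn
          rw [hx hxn, mul_zero]
      have hnorm1 : (∫ x in Ioo (0:ℝ) 1, (c * u x) ^ 2) = 1 := by
        have : (fun x => (c * u x) ^ 2) = fun x => c ^ 2 * u x ^ 2 := by
          funext x; ring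
        rw [this, MeasureTheory.integral_const_mul, hc2, ← hIdef,
          inv_mul_cancel₀ (ne_of_gt hpos)]
      have hmem : gagSq u / I ∈
          { t : ℝ | ∃ w : ℝ → ℝ, memX w ∧ (∫ x in Ioo (0 : ℝ) 1, (w x) ^ 2) = 1 ∧ gagSq w = t } :=
        ⟨fun x => c * u x, hscaleX, hnorm1, by rw [gagSq_smul, hc2, inv_mul_eq_div]⟩
      have hub : lam1 ≤ gagSq u / I := by
        apply csInf_le _ hmem
        exact ⟨0, by rintro t ⟨w, hw, hwn, rfl⟩; exact gagSq_nonneg w⟩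
      have hlb : (1:ℝ)/9 ≤ lam1 := by
        apply le_csInf ⟨_, hmem⟩
        rintro t ⟨w, hw, hwn, rfl⟩
        have := poincare w hw
        rw [hwn] at this
        linarith
      have hlam_pos : 0 < lam1 := lt_of_lt_of_le (by norm_num) hlb
      have hprod1 : lam1 * I ≤ 1 := by
        have h1 : lam1 ≤ 1 / I := hub.trans ((div_le_div_iff_of_pos_right hpos).mpr hgag1)
        calc lam1 * I ≤ (1 / I) * I := by nlinarith
          _ = 1 := by field_simp
      rw [le_div_iff₀ hlam_pos]
      nlinarith [mul_le_mul_of_nonneg_left hprod1 (by positivity : (0:ℝ) ≤ 2 * π * H)]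
  -- scaled function for Ozawa
  set v : ℝ → ℝ := fun x => Real.sqrt (2 * π) * u x with hvdef
  have hv2 : ∀ x, v x ^ 2 = 2 * π * u x ^ 2 := fun x => by
    rw [hvdef, mul_pow, Real.sq_sqrt h2π.le]
  have hvH : memH v := by
    refine ⟨measurable_const.mul hmeas, ?_, ?_⟩
    · have : (fun x => v x ^ 2) = fun x => 2 * π * u x ^ 2 := funext hv2
      rw [this]; exact hL2.const_mul _
    · rw [hvdef, gagKer_smul]; exact hker.const_mul _
  have hvn : gagNorm v ≤ Real.sqrt (2 * π) := by
    unfold gagNorm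
    rw [hvdef, gagSq_smul, Real.sq_sqrt h2π.le]
    calc Real.sqrt (2 * π * gagSq u) ≤ Real.sqrt (2 * π * 1) :=
          Real.sqrt_le_sqrt (by nlinarith [gagSq_nonneg u])
      _ = Real.sqrt (2 * π) := by rw [mul_one]
  have hvint : (∫ x : ℝ, v x ^ 2) = 2 * π * I := by
    have : (fun x => v x ^ 2) = fun x => 2 * π * u x ^ 2 := funext hv2
    rw [this, MeasureTheory.integral_const_mul, hIR]
  have heq : ∀ x, α / (2 * π) * v x ^ 2 = α * u x ^ 2 := fun x => by
    rw [hv2]; field_simp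
  have hOz := hOzawa v hvH hvn
  rw [hvint] at hOz
  have hexp1 : ∀ x : ℝ, ENNReal.ofReal (exp (α * u x ^ 2))
      = ENNReal.ofReal (exp (α * u x ^ 2) - 1) + 1 := fun x => by
    rw [← ENNReal.ofReal_one, ← ENNReal.ofReal_add
      (by nlinarith [Real.one_le_exp (by positivity : (0:ℝ) ≤ α * u x ^ 2)]) zero_le_one]
    norm_num
  calc (∫⁻ x in Ioo (0:ℝ) 1, ENNReal.ofReal (exp (α * u x ^ 2)))
      = ∫⁻ x in Ioo (0:ℝ) 1, (ENNReal.ofReal (exp (α * u x ^ 2) - 1) + 1) :=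
        lintegral_congr fun x => hexp1 x
    _ = (∫⁻ x in Ioo (0:ℝ) 1, ENNReal.ofReal (exp (α * u x ^ 2) - 1)) + 1 := by
        rw [lintegral_add_right _ measurable_const]
        norm_num [Real.volume_Ioo]
    _ ≤ (∫⁻ x : ℝ, ENNReal.ofReal (exp (α * u x ^ 2) - 1)) + 1 :=
        add_le_add_left (setLIntegral_le_lintegral _ _) 1
    _ = (∫⁻ x : ℝ, ENNReal.ofReal (exp (α / (2 * π) * v x ^ 2) - 1)) + 1 := by
        congr 1
        apply lintegral_congr fun x => by rw [heq]
    _ ≤ ENNReal.ofReal (H * (2 * π * I)) + 1 := add_le_add_left hOz 1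
    _ ≤ ENNReal.ofReal (2 * π * H / lam1) + 1 :=
        add_le_add_left (ENNReal.ofReal_le_ofReal hkey) 1
    _ = ENNReal.ofReal (2 * π * H / lam1 + 1) := by
        rw [ENNReal.ofReal_add (div_nonneg (by positivity) hlam_nonneg) zero_le_one,
          ENNReal.ofReal_one]
end
end

section
/- Assume f satisfies hypotheses (H). If Y ⊆ X is a finite-dimensional linear subspace spanned by (essentially) bounded functions, then sup_{u ∈ Y} φ(u) < ∞ and φ(u) → −∞ as ‖u‖_X → ∞ with u ∈ Y (i.e. for every A > 0 there exists R > 0 such that φ(u) ≤ −A whenever u ∈ Y and ‖u‖_X ≥ R). -/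
open MeasureTheory Real Set Filter Topology

noncomputable section

lemma primF_hasDerivAt (f : ℝ → ℝ) (hc : Continuous f) (t : ℝ) :
    HasDerivAt (primF f) (f t) t := by
  apply intervalIntegral.integral_hasDerivAt_right
    (hc.intervalIntegrable _ _) (hc.stronglyMeasurableAtFilter _ _) hc.continuousAt

lemma primF_neg_comp (f : ℝ → ℝ) :
    primF (fun s => -f (-s)) = fun t => primF f (-t) := by
  funext t
  simp only [primF]
  rw [intervalIntegral.integral_neg]
  rw [intervalIntegral.integral_comp_neg (f := f)]
  rw [neg_zero, intervalIntegral.integral_symm]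
  ring

lemma exp_ge_quarter_pow (y : ℝ) (hy : 0 ≤ y) : (y/4)^4 ≤ Real.exp y := by
  have h1 : Real.exp y = (Real.exp (y/4))^4 := by
    rw [← Real.exp_nat_mul]; ring_nf
  rw [h1]
  have h2 : y/4 ≤ Real.exp (y/4) := (Real.add_one_le_exp (y/4)).trans' (by linarith)
  exact pow_le_pow_left₀ (by linarith) h2 4

lemma growth_pos (f : ℝ → ℝ) (hc : Continuous f) (t₀ M : ℝ) (ht₀ : 0 < t₀) (hM : 0 < M)
    (hi : ∀ t : ℝ, t₀ ≤ |t| → 0 < primF f t ∧ primF f t ≤ M * |f t|)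
    (hii : ∀ t : ℝ, t ≠ 0 → 0 < 2 * primF f t ∧ 2 * primF f t ≤ f t * t) :
    ∃ c > 0, ∀ t : ℝ, 2*t₀ ≤ t → c * t^4 ≤ primF f t := by
  set F := primF f with hF
  have hd : ∀ t : ℝ, HasDerivAt (fun s => F s * Real.exp (-(s/M)))
      ((f t - F t / M) * Real.exp (-(t/M))) t := by
    intro t
    have h1 : HasDerivAt F (f t) t := primF_hasDerivAt f hc t
    have h2 : HasDerivAt (fun s : ℝ => Real.exp (-(s/M))) (-(1/M) * Real.exp (-(t/M))) t := by
      have : HasDerivAt (fun s : ℝ => -(s/M)) (-(1/M)) t := by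
        exact ((hasDerivAt_id t).div_const M).neg
      simpa [mul_comm] using this.exp
    have := h1.mul h2
    exact this.congr_deriv (by ring)
  have hmono : MonotoneOn (fun s => F s * Real.exp (-(s/M))) (Ici t₀) := by
    apply monotoneOn_of_deriv_nonneg (convex_Ici t₀)
    · exact Continuous.continuousOn (by
        exact ((continuous_iff_continuousAt.2 fun t => (primF_hasDerivAt f hc t).continuousAt).mul
          (Real.continuous_exp.comp (by fun_prop))))
    · intro t ht
      exact (hd t).differentiableAt.differentiableWithinAt
    · intro t ht
      rw [interior_Ici] at ht
      have htpos : 0 < t := ht₀.trans ht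
      have habs : t₀ ≤ |t| := by rw [abs_of_pos htpos]; exact le_of_lt ht
      obtain ⟨hF1, hF2⟩ := hi t habs
      obtain ⟨hG1, hG2⟩ := hii t (ne_of_gt htpos)
      have hfpos : 0 < f t := by nlinarith
      rw [abs_of_pos hfpos] at hF2
      rw [(hd t).deriv]
      have : 0 ≤ f t - F t / M := by
        rw [sub_nonneg, div_le_iff₀ hM]; linarith
      positivity
  have hFt₀ : 0 < F t₀ := (hi t₀ (by rw [abs_of_pos ht₀])).1
  refine ⟨F t₀ / (8*M)^4, by positivity, fun t ht => ?_⟩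
  have h2t₀ : 0 < t := lt_of_lt_of_le (by linarith) ht
  have hkey : F t₀ * Real.exp (-(t₀/M)) ≤ F t * Real.exp (-(t/M)) :=
    hmono (by simp) (by simp; linarith) (by linarith)
  have hFt : F t₀ * Real.exp ((t - t₀)/M) ≤ F t := by
    have hkey2 := mul_le_mul_of_nonneg_right hkey (le_of_lt (Real.exp_pos (t/M)))
    rw [mul_assoc, mul_assoc, ← Real.exp_add, ← Real.exp_add] at hkey2
    simpa [neg_add_eq_sub, sub_div] using hkey2
  have hexp : ((t - t₀)/M/4)^4 ≤ Real.exp ((t - t₀)/M) :=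
    exp_ge_quarter_pow _ (div_nonneg (by linarith) hM.le)
  have h5 : (t/(8*M))^4 ≤ ((t - t₀)/M/4)^4 := by
    apply pow_le_pow_left₀ (by positivity)
    rw [div_div, div_le_div_iff₀ (by positivity) (by positivity)]
    nlinarith
  calc F t₀ / (8*M)^4 * t^4 = F t₀ * (t/(8*M))^4 := by
        field_simp
    _ ≤ F t₀ * Real.exp ((t - t₀)/M) :=
        mul_le_mul_of_nonneg_left (h5.trans hexp) (le_of_lt hFt₀)
    _ ≤ F t := hFt

lemma primF_nonneg (f : ℝ → ℝ)
    (hii : ∀ t : ℝ, t ≠ 0 → 0 < 2 * primF f t ∧ 2 * primF f t ≤ f t * t) (t : ℝ) :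
    0 ≤ primF f t := by
  rcases eq_or_ne t 0 with rfl | h
  · simp [primF]
  · linarith [(hii t h).1]

lemma growth (f : ℝ → ℝ) (hc : Continuous f) (t₀ M : ℝ) (ht₀ : 0 < t₀) (hM : 0 < M)
    (hi : ∀ t : ℝ, t₀ ≤ |t| → 0 < primF f t ∧ primF f t ≤ M * |f t|)
    (hii : ∀ t : ℝ, t ≠ 0 → 0 < 2 * primF f t ∧ 2 * primF f t ≤ f t * t) :
    ∃ c > 0, ∃ d : ℝ, 0 ≤ d ∧ ∀ t : ℝ, c * t^4 - d ≤ primF f t := by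
  obtain ⟨c₁, hc₁, h₁⟩ := growth_pos f hc t₀ M ht₀ hM hi hii
  have hneg := growth_pos (fun s => -f (-s)) (by fun_prop) t₀ M ht₀ hM
    (by
      intro t ht
      rw [primF_neg_comp]
      simp only [abs_neg]
      have := hi (-t) (by rwa [abs_neg])
      exact ⟨this.1, by simpa using this.2⟩)
    (by
      intro t ht
      rw [primF_neg_comp]
      have := hii (-t) (neg_ne_zero.2 ht)
      refine ⟨this.1, ?_⟩
      show 2 * primF f (-t) ≤ -f (-t) * t
      nlinarith [this.2])
  obtain ⟨c₂, hc₂, h₂⟩ := hneg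
  rw [primF_neg_comp] at h₂
  refine ⟨min c₁ c₂, lt_min hc₁ hc₂, min c₁ c₂ * (2*t₀)^4, by positivity, fun t => ?_⟩
  set c := min c₁ c₂ with hcdef
  have hc : 0 < c := lt_min hc₁ hc₂
  have hnn := primF_nonneg f hii
  rcases le_total (|t|) (2*t₀) with h | h
  · have : c * t^4 ≤ c * (2*t₀)^4 := by
      apply mul_le_mul_of_nonneg_left _ hc.le
      calc t^4 = |t|^4 := by rw [← abs_pow, abs_of_nonneg (by positivity)]
        _ ≤ (2*t₀)^4 := pow_le_pow_left₀ (abs_nonneg t) h 4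
    linarith [hnn t]
  · rcases le_total 0 t with h0 | h0
    · rw [abs_of_nonneg h0] at h
      have := h₁ t h
      have hcle : c ≤ c₁ := min_le_left _ _
      have h6 : c * t^4 ≤ c₁ * t^4 := mul_le_mul_of_nonneg_right hcle (pow_nonneg h0 4)
      have h7 : 0 ≤ c * (2*t₀)^4 := by positivity
      linarith
    · rw [abs_of_nonpos h0] at h
      have := h₂ (-t) h
      simp only [neg_neg] at this
      have hcle : c ≤ c₂ := min_le_right _ _
      have ht4 : (-t)^4 = t^4 := by ring
      rw [ht4] at this
      have h6 : c * t^4 ≤ c₂ * t^4 := mul_le_mul_of_nonneg_right hcle (by positivity)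
      have h7 : 0 ≤ c * (2*t₀)^4 := by positivity
      linarith

lemma gagSq_congr_ae {u v : ℝ → ℝ} (h : u =ᵐ[volume] v) : gagSq u = gagSq v := by
  apply integral_congr_ae
  obtain ⟨N, hsub, hmeas, hN⟩ := exists_measurable_superset_of_null (ae_iff.1 h)
  have hpr : (volume : Measure (ℝ×ℝ)) (N ×ˢ (univ : Set ℝ) ∪ (univ : Set ℝ) ×ˢ N) = 0 := by
    apply measure_union_null <;> rw [Measure.volume_eq_prod, Measure.prod_prod] <;> simp [hN]
  have hbad : volume {p : ℝ×ℝ | ¬ gagKer u p = gagKer v p} = 0 := by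
    refine measure_mono_null (fun p hp => ?_) hpr
    simp only [mem_setOf_eq] at hp
    by_contra hc
    simp only [mem_union, mem_prod, mem_univ, and_true, true_and, not_or] at hc
    apply hp
    have h1 : u p.1 = v p.1 := by by_contra h'; exact hc.1 (hsub h')
    have h2 : u p.2 = v p.2 := by by_contra h'; exact hc.2 (hsub h')
    simp [gagKer, h1, h2]
  exact ae_iff.2 hbad

lemma gagSq_comb_le {n : ℕ} (b : Fin n → ℝ → ℝ) (c : Fin n → ℝ)
    (hu : Integrable (gagKer (fun x => ∑ i, c i * b i x)))
    (hb : ∀ i, Integrable (gagKer (b i))) :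
    gagSq (fun x => ∑ i, c i * b i x) ≤ ∑ i, (n : ℝ) * c i^2 * gagSq (b i) := by
  have hpt : ∀ p : ℝ × ℝ, gagKer (fun x => ∑ i, c i * b i x) p
      ≤ ∑ i, (n:ℝ) * c i ^2 * gagKer (b i) p := by
    intro p
    unfold gagKer
    have key : ((∑ i, c i * b i p.1) - ∑ i, c i * b i p.2)^2
        ≤ (n:ℝ) * ∑ i, (c i)^2 * (b i p.1 - b i p.2)^2 := by
      rw [← Finset.sum_sub_distrib]
      have h1 : ∀ i ∈ Finset.univ, c i * b i p.1 - c i * b i p.2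
          = c i * (b i p.1 - b i p.2) := by intros; ring
      rw [Finset.sum_congr rfl h1]
      calc (∑ i, c i * (b i p.1 - b i p.2))^2
          ≤ (Finset.univ.card : ℝ) * ∑ i, (c i * (b i p.1 - b i p.2))^2 :=
            sq_sum_le_card_mul_sum_sq
        _ = (n:ℝ) * ∑ i, (c i)^2 * (b i p.1 - b i p.2)^2 := by
            simp [Finset.card_univ, mul_pow]
    rcases eq_or_lt_of_le (sq_nonneg (|p.1 - p.2|)) with hD | hD
    · simp [← hD]
    · rw [div_le_iff₀ hD]
      have h2 : ∑ i, (n:ℝ) * c i ^2 * ((b i p.1 - b i p.2)^2 / |p.1 - p.2|^2)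
          = ((n:ℝ) * ∑ i, (c i)^2 * (b i p.1 - b i p.2)^2) / |p.1 - p.2|^2 := by
        rw [Finset.mul_sum, Finset.sum_div]
        exact Finset.sum_congr rfl fun i _ => by ring
      rw [h2, div_mul_cancel₀ _ (ne_of_gt hD)]
      exact key
  calc gagSq (fun x => ∑ i, c i * b i x)
      ≤ ∫ p : ℝ × ℝ, ∑ i, (n:ℝ) * c i ^2 * gagKer (b i) p :=
        integral_mono hu (integrable_finset_sum _ fun i _ => ((hb i).const_mul _)) hpt
    _ = ∑ i, (n:ℝ) * c i^2 * gagSq (b i) := by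
        rw [integral_finset_sum _ fun i _ => ((hb i).const_mul _)]
        simp [gagSq, integral_const_mul]

section NormComp
variable {n : ℕ} (b : Fin n → ℝ → ℝ)

lemma normComp (hbX : ∀ i, memX (b i)) (hbdd : ∀ i, ∃ C : ℝ, ∀ᵐ x : ℝ, |b i x| ≤ C)
    (hYX : ∀ c : Fin n → ℝ, memX (fun x => ∑ i, c i * b i x)) :
    ∃ K : ℝ, 0 < K ∧ ∀ c : Fin n → ℝ,
      gagNorm (fun x => ∑ i, c i * b i x)
        ≤ K * Real.sqrt (∫ x in Ioo (0:ℝ) 1, (∑ i, c i * b i x)^2) := by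
  classical
  set μ := (volume : Measure ℝ).restrict (Ioo (0:ℝ) 1) with hμ
  haveI : IsFiniteMeasure μ := by
    constructor
    rw [hμ, Measure.restrict_apply_univ, Real.volume_Ioo]
    norm_num
  -- choose a.e. bounds
  choose C hC using hbdd
  have haebd : ∀ᵐ x : ℝ, ∀ i, |b i x| ≤ C i := ae_all_iff.2 hC
  -- MemLp of linear combinations
  have hmem : ∀ c : Fin n → ℝ, MemLp (fun x => ∑ i, c i * b i x) 2 μ := by
    intro c
    refine MemLp.of_bound ((Finset.measurable_sum _ fun i _ =>
      (measurable_const.mul (hbX i).1.1)).aestronglyMeasurable) (∑ i, |c i| * C i) ?_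
    filter_upwards [ae_restrict_of_ae haebd] with x hx
    calc ‖∑ i, c i * b i x‖ ≤ ∑ i, ‖c i * b i x‖ := norm_sum_le _ _
      _ ≤ ∑ i, |c i| * C i := by
          apply Finset.sum_le_sum
          intro i _
          rw [norm_mul]
          exact mul_le_mul_of_nonneg_left (hx i) (abs_nonneg _)
  -- the linear map into L²
  let T : (Fin n → ℝ) →ₗ[ℝ] Lp ℝ 2 μ :=
    { toFun := fun c => (hmem c).toLp _
      map_add' := fun c d =>
        (MemLp.toLp_congr (hmem (c + d)) ((hmem c).add (hmem d)) (ae_of_all _ fun x => by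
          simp [add_mul, Finset.sum_add_distrib])).trans (MemLp.toLp_add _ _)
      map_smul' := fun a c =>
        (MemLp.toLp_congr (hmem (a • c)) ((hmem c).const_smul a) (ae_of_all _ fun x => by
          simp [Finset.mul_sum, mul_assoc])).trans
          (MemLp.toLp_const_smul a (hmem c)) }
  have hTnorm : ∀ c : Fin n → ℝ,
      ‖T c‖ = Real.sqrt (∫ x, (∑ i, c i * b i x)^2 ∂μ) := by
    intro c
    have h1 : (inner ℝ (T c) (T c) : ℝ) = ‖T c‖ ^ 2 := real_inner_self_eq_norm_sq _
    have h2 : (inner ℝ (T c) (T c) : ℝ) = ∫ x, (∑ i, c i * b i x)^2 ∂μ := by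
      rw [MeasureTheory.L2.inner_def]
      refine integral_congr_ae ?_
      filter_upwards [MemLp.coeFn_toLp (hmem c)] with x hx
      rw [RCLike.inner_apply]
      have hx' : (T c : ℝ → ℝ) x = ∑ i, c i * b i x := hx
      rw [hx']
      simp [sq]
    rw [← h2, h1]
    exact (Real.sqrt_sq (norm_nonneg _)).symm
  obtain ⟨N', hcompl⟩ := Submodule.exists_isCompl (LinearMap.ker T)
  let S : N' →ₗ[ℝ] Lp ℝ 2 μ := T.comp N'.subtype
  have hSker : LinearMap.ker S = ⊥ := by
    rw [eq_bot_iff]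
    intro x hx
    have h1 : (x : Fin n → ℝ) ∈ LinearMap.ker T := hx
    have h2 := Submodule.disjoint_def.1 hcompl.disjoint _ h1 x.2
    exact Submodule.mem_bot ℝ |>.2 (Subtype.ext h2)
  have hSinj : Function.Injective S := LinearMap.ker_eq_bot.1 hSker
  let e := LinearEquiv.ofInjective S hSinj
  haveI : FiniteDimensional ℝ (LinearMap.range S) := e.finiteDimensional
  let L := (e.symm.toLinearMap).toContinuousLinearMap
  have hL : ∀ x : N', ‖(x : Fin n → ℝ)‖ ≤ ‖L‖ * ‖S x‖ := by
    intro x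
    have h1 : L (e x) = x := by
      show (e.symm.toLinearMap).toContinuousLinearMap (e x) = x
      rw [LinearMap.coe_toContinuousLinearMap']
      exact e.symm_apply_apply x
    have h2 : ‖(x : Fin n → ℝ)‖ = ‖L (e x)‖ := by rw [h1]; rfl
    have h3 : ‖e x‖ = ‖S x‖ := by
      have : ((e x : LinearMap.range S) : Lp ℝ 2 μ) = S x := LinearEquiv.ofInjective_apply _ _
      rw [← this]
      rfl
    calc ‖(x : Fin n → ℝ)‖ = ‖L (e x)‖ := h2
      _ ≤ ‖L‖ * ‖e x‖ := L.le_opNorm _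
      _ = ‖L‖ * ‖S x‖ := by rw [h3]
  have hSnn : 0 ≤ (n:ℝ) * ∑ i, gagSq (b i) :=
    mul_nonneg (Nat.cast_nonneg n) (Finset.sum_nonneg fun i _ => gagSq_nonneg _)
  refine ⟨Real.sqrt ((n:ℝ) * ∑ i, gagSq (b i)) * ‖L‖ + 1, by positivity, fun c => ?_⟩
  have hcmem : c ∈ (LinearMap.ker T) ⊔ N' := by rw [hcompl.sup_eq_top]; trivial
  obtain ⟨c₀, hc₀, c₁, hc₁, hsum⟩ := Submodule.mem_sup.1 hcmem
  have hTc₀ : T c₀ = 0 := hc₀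
  have hae0 : (fun x => ∑ i, c₀ i * b i x) =ᵐ[volume] (0 : ℝ → ℝ) := by
    have h1 : (fun x => ∑ i, c₀ i * b i x) =ᵐ[μ] (0 : ℝ → ℝ) :=
      (MemLp.toLp_eq_toLp_iff (hmem c₀) MemLp.zero).1 (hTc₀.trans (MemLp.toLp_zero _).symm)
    have h2 : ∀ᵐ x : ℝ, x ∈ Ioo (0:ℝ) 1 → (∑ i, c₀ i * b i x) = 0 :=
      (ae_restrict_iff' measurableSet_Ioo).1 h1
    have h3 := (hYX c₀).2
    filter_upwards [h2, h3] with x h2x h3x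
    by_cases hx : x ∈ Ioo (0:ℝ) 1
    · exact h2x hx
    · exact h3x hx
  have hcong : gagSq (fun x => ∑ i, c i * b i x) = gagSq (fun x => ∑ i, c₁ i * b i x) := by
    apply gagSq_congr_ae
    filter_upwards [hae0] with x hx
    have hx' : (∑ i, c₀ i * b i x) = 0 := hx
    have : ∑ i, c i * b i x = (∑ i, c₀ i * b i x) + ∑ i, c₁ i * b i x := by
      rw [← Finset.sum_add_distrib]
      refine Finset.sum_congr rfl fun i _ => ?_
      have : c i = c₀ i + c₁ i := by rw [← hsum]; rfl
      rw [this]; ring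
    rw [this, hx', zero_add]
  have hb' : ∀ i, Integrable (gagKer (b i)) := fun i => (hbX i).1.2.2
  have h4 : gagSq (fun x => ∑ i, c₁ i * b i x) ≤ (n:ℝ) * (∑ i, gagSq (b i)) * ‖c₁‖^2 := by
    refine (gagSq_comb_le b c₁ (hYX c₁).1.2.2 hb').trans ?_
    calc ∑ i, (n:ℝ) * c₁ i ^2 * gagSq (b i)
        ≤ ∑ i, (n:ℝ) * ‖c₁‖^2 * gagSq (b i) := by
          refine Finset.sum_le_sum fun i _ => ?_
          have h5 : c₁ i ^ 2 ≤ ‖c₁‖^2 := by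
            calc c₁ i ^2 = ‖c₁ i‖^2 := by rw [Real.norm_eq_abs, sq_abs]
              _ ≤ ‖c₁‖^2 := pow_le_pow_left₀ (norm_nonneg _) (norm_le_pi_norm c₁ i) 2
          exact mul_le_mul_of_nonneg_right
            (mul_le_mul_of_nonneg_left h5 (Nat.cast_nonneg n)) (gagSq_nonneg _)
      _ = (n:ℝ) * (∑ i, gagSq (b i)) * ‖c₁‖^2 := by
          rw [← Finset.mul_sum]
          ring
  have h6 : ‖c₁‖ ≤ ‖L‖ * ‖T c‖ := by
    have h7 : S ⟨c₁, hc₁⟩ = T c := by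
      show T c₁ = T c
      rw [← hsum, map_add, hTc₀, zero_add]
    have := hL ⟨c₁, hc₁⟩
    rwa [h7] at this
  have h8 : gagNorm (fun x => ∑ i, c i * b i x)
      ≤ Real.sqrt ((n:ℝ) * ∑ i, gagSq (b i)) * ‖c₁‖ := by
    rw [gagNorm, hcong]
    calc Real.sqrt (gagSq (fun x => ∑ i, c₁ i * b i x))
        ≤ Real.sqrt ((n:ℝ) * (∑ i, gagSq (b i)) * ‖c₁‖^2) := Real.sqrt_le_sqrt h4
      _ = Real.sqrt ((n:ℝ) * ∑ i, gagSq (b i)) * ‖c₁‖ := by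
          rw [Real.sqrt_mul hSnn, Real.sqrt_sq (norm_nonneg _)]
  calc gagNorm (fun x => ∑ i, c i * b i x)
      ≤ Real.sqrt ((n:ℝ) * ∑ i, gagSq (b i)) * ‖c₁‖ := h8
    _ ≤ Real.sqrt ((n:ℝ) * ∑ i, gagSq (b i)) * (‖L‖ * ‖T c‖) :=
        mul_le_mul_of_nonneg_left h6 (Real.sqrt_nonneg _)
    _ = (Real.sqrt ((n:ℝ) * ∑ i, gagSq (b i)) * ‖L‖) * ‖T c‖ := by ring
    _ ≤ (Real.sqrt ((n:ℝ) * ∑ i, gagSq (b i)) * ‖L‖ + 1) * ‖T c‖ :=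
        mul_le_mul_of_nonneg_right (by linarith) (norm_nonneg _)
    _ = _ := by rw [hTnorm c]
end NormComp

/-- behaviour of `φ` on finite-dimensional subspaces of bounded
functions (Lemma 3.3). -/
theorem statement13 (f : ℝ → ℝ) (hf : HypH f)
    (n : ℕ) (b : Fin n → ℝ → ℝ)
    (hbX : ∀ i, memX (b i)) (hbdd : ∀ i, ∃ C : ℝ, ∀ᵐ x : ℝ, |b i x| ≤ C)
    (Y : Set (ℝ → ℝ)) (hY : Y = (Submodule.span ℝ (Set.range b) : Submodule ℝ (ℝ → ℝ)))
    (hYX : ∀ u ∈ Y, memX u) :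
    (∃ B : ℝ, ∀ u ∈ Y, phi f u ≤ B) ∧
    (∀ A : ℝ, 0 < A → ∃ R : ℝ, 0 < R ∧
      ∀ u ∈ Y, R ≤ gagNorm u → phi f u ≤ -A) := by
  classical
  obtain ⟨hcont, hf0, ⟨t₀, ht₀, M, hM, hi⟩, hii, hiii, hiv⟩ := hf
  obtain ⟨c, hcpos, d, hd, hcd⟩ := growth f hcont t₀ M ht₀ hM hi hii
  have hFnn := primF_nonneg f hii
  have hFc : Continuous (primF f) :=
    continuous_iff_continuousAt.2 fun t => (primF_hasDerivAt f hcont t).continuousAt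
  -- all coefficient combinations are in Y
  have hcomb_mem : ∀ cc : Fin n → ℝ, (fun x => ∑ i, cc i * b i x) ∈ Y := by
    intro cc
    rw [hY, SetLike.mem_coe]
    refine (Submodule.mem_span_range_iff_exists_fun ℝ).2 ⟨cc, ?_⟩
    funext x
    simp [Finset.sum_apply]
  have hYX' : ∀ cc : Fin n → ℝ, memX (fun x => ∑ i, cc i * b i x) :=
    fun cc => hYX _ (hcomb_mem cc)
  obtain ⟨K, hK, hKb⟩ := normComp b hbX hbdd hYX'
  set ε := c / K^4 with hε
  have hεpos : 0 < ε := by positivity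
  choose C hC using hbdd
  have haebd : ∀ᵐ x : ℝ, ∀ i, |b i x| ≤ C i := ae_all_iff.2 hC
  set μ := (volume : Measure ℝ).restrict (Ioo (0:ℝ) 1) with hμ
  haveI : IsFiniteMeasure μ := by
    constructor
    rw [hμ, Measure.restrict_apply_univ, Real.volume_Ioo]
    norm_num
  have hμuniv : (μ Set.univ).toReal = 1 := by
    rw [hμ, Measure.restrict_apply_univ, Real.volume_Ioo]
    norm_num
  -- the key estimate
  have main : ∀ u ∈ Y, phi f u ≤ gagNorm u^2 / (4*π) - ε * gagNorm u^4 + d := by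
    intro u hu
    have huX := hYX u hu
    have humeas : Measurable u := huX.1.1
    rw [hY, SetLike.mem_coe] at hu
    obtain ⟨cc, hcc⟩ := (Submodule.mem_span_range_iff_exists_fun ℝ).1 hu
    have hufun : u = fun x => ∑ i, cc i * b i x := by
      rw [← hcc]; funext x; simp [Finset.sum_apply]
    set B := ∑ i, |cc i| * C i with hB
    have haeB : ∀ᵐ x : ℝ, |u x| ≤ B := by
      filter_upwards [haebd] with x hx
      rw [hufun]
      calc |∑ i, cc i * b i x| ≤ ∑ i, |cc i * b i x| := Finset.abs_sum_le_sum_abs _ _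
        _ ≤ ∑ i, |cc i| * C i := by
            refine Finset.sum_le_sum fun i _ => ?_
            rw [abs_mul]
            exact mul_le_mul_of_nonneg_left (hx i) (abs_nonneg _)
    obtain ⟨D₀, hD₀⟩ := (isCompact_Icc (a := -B) (b := B)).exists_bound_of_continuousOn
      hFc.continuousOn
    -- integrability
    have h_int_u2 : Integrable (fun x => u x ^ 2) μ := huX.1.2.1.restrict
    have h_int_u4 : Integrable (fun x => u x ^ 4) μ := by
      refine Integrable.mono' (integrable_const (B^4)) ((humeas.pow_const 4).aestronglyMeasurable)
        ?_
      filter_upwards [ae_restrict_of_ae haeB] with x hx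
      rw [Real.norm_eq_abs, abs_pow]
      exact pow_le_pow_left₀ (abs_nonneg _) hx 4
    have h_int_F : Integrable (fun x => primF f (u x)) μ := by
      refine Integrable.mono' (integrable_const D₀)
        ((hFc.measurable.comp humeas).aestronglyMeasurable) ?_
      filter_upwards [ae_restrict_of_ae haeB] with x hx
      exact hD₀ (u x) (abs_le.1 hx)
    set s := ∫ x, u x ^ 2 ∂μ with hs
    have hsnn : 0 ≤ s := integral_nonneg fun x => sq_nonneg _
    -- variance inequality : s^2 ≤ ∫ u^4
    have hvar : s^2 ≤ ∫ x, u x ^ 4 ∂μ := by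
      have h0 : 0 ≤ ∫ x, (u x ^ 2 - s)^2 ∂μ := integral_nonneg fun x => sq_nonneg _
      have hexp : ∫ x, (u x ^ 2 - s)^2 ∂μ
          = (∫ x, u x ^ 4 ∂μ) - 2*s*s + s^2 := by
        have h1 : ∀ x, (u x ^ 2 - s)^2 = u x ^ 4 - 2*s*(u x ^ 2) + s^2 := fun x => by ring
        simp_rw [h1]
        have hint1 : Integrable (fun x => 2*s*(u x ^ 2)) μ := h_int_u2.const_mul (2*s)
        have hint2 : Integrable (fun x => u x ^ 4 - 2*s*(u x ^ 2)) μ := h_int_u4.sub hint1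
        rw [integral_add hint2 (integrable_const _), integral_sub h_int_u4 hint1,
          integral_const_mul, integral_const, measureReal_def, hμuniv]
        rw [← hs, one_smul]
      nlinarith [h0, hexp]
    -- lower bound on the potential term
    have hFlow : c * s^2 - d ≤ ∫ x, primF f (u x) ∂μ := by
      have hint3 : Integrable (fun x => c * u x ^ 4) μ := h_int_u4.const_mul c
      have hint4 : Integrable (fun x => c * u x ^ 4 - d) μ := hint3.sub (integrable_const d)
      have h2 : ∫ x, (c * u x ^ 4 - d) ∂μ ≤ ∫ x, primF f (u x) ∂μ :=
        integral_mono hint4 h_int_F (fun x => hcd (u x))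
      have h3 : ∫ x, (c * u x ^ 4 - d) ∂μ = c * (∫ x, u x ^ 4 ∂μ) - d := by
        rw [integral_sub hint3 (integrable_const d), integral_const_mul,
          integral_const, measureReal_def, hμuniv]
        rw [smul_eq_mul]
        ring
      have h4 : c * s^2 ≤ c * ∫ x, u x ^ 4 ∂μ := mul_le_mul_of_nonneg_left hvar hcpos.le
      linarith
    -- norm comparison
    have hGn : gagNorm u ≤ K * Real.sqrt s := by
      rw [hs, hufun]
      exact hKb cc
    have hG2 : gagNorm u ^ 2 ≤ K^2 * s := by
      calc gagNorm u ^2 ≤ (K * Real.sqrt s)^2 :=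
            pow_le_pow_left₀ (Real.sqrt_nonneg _) hGn 2
        _ = K^2 * s := by rw [mul_pow, Real.sq_sqrt hsnn]
    have hgagSq : gagSq u = gagNorm u ^ 2 := (Real.sq_sqrt (gagSq_nonneg u)).symm
    have hεG : ε * gagNorm u ^4 ≤ c * s^2 := by
      have hK2 : (0:ℝ) < K^2 := by positivity
      have h5 : gagNorm u ^4 = (gagNorm u ^2)^2 := by ring
      have h6 : (gagNorm u ^2)^2 ≤ (K^2 * s)^2 :=
        pow_le_pow_left₀ (sq_nonneg _) hG2 2
      rw [hε, h5]
      rw [div_mul_eq_mul_div, div_le_iff₀ (by positivity)]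
      calc c * (gagNorm u ^2)^2 ≤ c * (K^2*s)^2 := mul_le_mul_of_nonneg_left h6 hcpos.le
        _ = c * s^2 * K^4 := by ring
    have hphi : phi f u = gagSq u / (4*π) - ∫ x, primF f (u x) ∂μ := rfl
    rw [hphi, hgagSq]
    linarith
  -- part 2 first
  have part2 : ∀ A : ℝ, 0 < A → ∃ R : ℝ, 0 < R ∧
      ∀ u ∈ Y, R ≤ gagNorm u → phi f u ≤ -A := by
    intro A hA
    set R := Real.sqrt (max ((1/(4*π)+1)/ε) (A + |d| + 1)) with hR
    have hmaxpos : 0 < max ((1/(4*π)+1)/ε) (A + |d| + 1) :=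
      lt_max_of_lt_right (by positivity)
    refine ⟨R, Real.sqrt_pos.2 hmaxpos, fun u hu hRu => ?_⟩
    have hG0 : 0 ≤ gagNorm u := Real.sqrt_nonneg _
    have hR0 : 0 ≤ R := Real.sqrt_nonneg _
    have hRsq : R^2 = max ((1/(4*π)+1)/ε) (A + |d| + 1) := Real.sq_sqrt hmaxpos.le
    have hG2 : R^2 ≤ gagNorm u ^2 := pow_le_pow_left₀ hR0 hRu 2
    have hR1 : 1/(4*π) + 1 ≤ ε * R^2 := by
      have := le_max_left ((1/(4*π)+1)/ε) (A + |d| + 1)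
      rw [← hRsq] at this
      rw [div_le_iff₀ hεpos] at this
      linarith
    have hR2 : A + |d| + 1 ≤ R^2 := by
      have := le_max_right ((1/(4*π)+1)/ε) (A + |d| + 1)
      rw [← hRsq] at this
      exact this
    have k1 : 1 ≤ ε * gagNorm u ^2 - 1/(4*π) := by nlinarith
    have k2 : R^2 * 1 ≤ gagNorm u ^2 * (ε * gagNorm u ^2 - 1/(4*π)) :=
      mul_le_mul hG2 k1 zero_le_one (sq_nonneg _)
    have k3 : gagNorm u ^2 * (ε * gagNorm u ^2 - 1/(4*π))
        = ε * gagNorm u ^4 - gagNorm u ^2/(4*π) := by ring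
    have hmain := main u hu
    have hdle : d ≤ |d| := le_abs_self d
    nlinarith [hmain, k2, k3, hR2, hdle]
  constructor
  · obtain ⟨R, hRpos, hR⟩ := part2 1 one_pos
    refine ⟨R^2/(4*π), fun u hu => ?_⟩
    rcases le_total (gagNorm u) R with h | h
    · have h1 : gagSq u ≤ R^2 := by
        have := pow_le_pow_left₀ (Real.sqrt_nonneg (gagSq u)) h 2
        rwa [Real.sq_sqrt (gagSq_nonneg u)] at this
      have h2 : 0 ≤ ∫ x in Ioo (0:ℝ) 1, primF f (u x) :=
        integral_nonneg fun x => hFnn (u x)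
      have hπ : 0 < 4*π := by positivity
      calc phi f u = gagSq u/(4*π) - ∫ x in Ioo (0:ℝ) 1, primF f (u x) := rfl
        _ ≤ gagSq u/(4*π) := by linarith
        _ ≤ R^2/(4*π) := by gcongr
    · have := hR u hu h
      have : phi f u ≤ -1 := this
      have hnn : (0:ℝ) ≤ R^2/(4*π) := by positivity
      linarith
  · exact part2
end
end

section
/- Let f : ℝ → ℝ be continuous with F(t) = ∫₀^t f(τ) dτ, and suppose there exist t₀, M > 0 such that 0 < F(t) ≤ M|f(t)| for all |t| ≥ t₀ and 0 < 2F(t) ≤ f(t)t for all t ≠ 0. Then for every ε > 0 there exists t_ε > 0 such that F(t) ≤ ε f(t) t for all |t| ≥ t_ε. -/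
open MeasureTheory Real Set Filter Topology

noncomputable section

/-- `F(t) ≤ ε f(t) t` for `|t|` large (inequality (3.3)). -/
theorem statement15 (f : ℝ → ℝ) (hf : Continuous f)
    (t₀ M : ℝ) (ht₀ : 0 < t₀) (hM : 0 < M)
    (h1 : ∀ t : ℝ, t₀ ≤ |t| → 0 < primF f t ∧ primF f t ≤ M * |f t|)
    (h2 : ∀ t : ℝ, t ≠ 0 → 0 < 2 * primF f t ∧ 2 * primF f t ≤ f t * t) :
    ∀ ε : ℝ, 0 < ε → ∃ tε : ℝ, 0 < tε ∧
      ∀ t : ℝ, tε ≤ |t| → primF f t ≤ ε * (f t * t) := by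
  intro ε hε
  refine ⟨max t₀ (M / ε), lt_max_of_lt_left ht₀, fun t ht => ?_⟩
  have ht₀t : t₀ ≤ |t| := le_trans (le_max_left _ _) ht
  have hMε : M / ε ≤ |t| := le_trans (le_max_right _ _) ht
  have htne : t ≠ 0 := by
    intro h
    rw [h, abs_zero] at ht₀t
    exact absurd ht₀t (not_le.mpr ht₀)
  obtain ⟨hFpos, hft⟩ := h2 t htne
  have hftpos : 0 < f t * t := lt_of_lt_of_le hFpos hft
  have habs : |f t| * |t| = f t * t := by
    rw [← abs_mul]; exact abs_of_pos hftpos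
  have htabs : 0 < |t| := lt_of_lt_of_le ht₀ ht₀t
  have hF : primF f t ≤ M * |f t| := (h1 t ht₀t).2
  have : M * |f t| ≤ ε * (f t * t) := by
    rw [← habs]
    have h1' : M ≤ ε * |t| := (div_le_iff₀ hε).mp hMε |>.trans_eq (mul_comm _ _)
    calc M * |f t| ≤ (ε * |t|) * |f t| := by
          exact mul_le_mul_of_nonneg_right h1' (abs_nonneg _)
      _ = ε * (|f t| * |t|) := by ring
  linarith
end
end

section
/- Assume the Trudinger–Moser property holds with some constant ω ∈ (0,π] and that f satisfies hypotheses (H). Then every Palais–Smale sequence for φ is bounded in X: if (u_n) ⊂ X satisfies φ(u_n) → c for some c ∈ ℝ and sup{|⟨φ'(u_n), v⟩| : v ∈ X, ‖v‖_X ≤ 1} → 0, then sup_n ‖u_n‖_X < ∞. -/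
open MeasureTheory Real Set Filter Topology

noncomputable section

/-- Pointwise bound derived from (H)(i),(ii): `4F(s) ≤ f(s)s + B` for all `s`. -/
lemma key_pointwise (f : ℝ → ℝ) (hfc : Continuous f) (t₀ M : ℝ) (ht₀ : 0 < t₀) (hM : 0 < M)
    (hi : ∀ t : ℝ, t₀ ≤ |t| → 0 < primF f t ∧ primF f t ≤ M * |f t|)
    (hii : ∀ t : ℝ, t ≠ 0 → 0 < 2 * primF f t ∧ 2 * primF f t ≤ f t * t) :
    ∃ B : ℝ, 0 ≤ B ∧ ∀ s : ℝ, 4 * primF f s ≤ f s * s + B ∧ 0 ≤ primF f s := by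
  set T : ℝ := max t₀ (4 * M) with hT
  have hT0 : 0 < T := lt_of_lt_of_le ht₀ (le_max_left _ _)
  have hne : (Icc (-T) T).Nonempty := ⟨0, by constructor <;> simp [le_of_lt hT0]⟩
  have hgc : ContinuousOn (fun s : ℝ => f s * s) (Icc (-T) T) :=
    (hfc.mul continuous_id).continuousOn
  obtain ⟨x₀, hx₀, hmax⟩ := isCompact_Icc.exists_isMaxOn hne hgc
  set B : ℝ := f x₀ * x₀ with hB
  have hF0 : primF f 0 = 0 := intervalIntegral.integral_same
  have h2F : ∀ s : ℝ, 2 * primF f s ≤ f s * s := by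
    intro s
    rcases eq_or_ne s 0 with h | h
    · simp [h, hF0]
    · exact (hii s h).2
  have hFnn : ∀ s : ℝ, 0 ≤ primF f s := by
    intro s
    rcases eq_or_ne s 0 with h | h
    · simp [h, hF0]
    · linarith [(hii s h).1]
  have hfsnn : ∀ s : ℝ, 0 ≤ f s * s := fun s => le_trans (by linarith [hFnn s]) (h2F s)
  have hB0 : 0 ≤ B := by
    have h0mem : (0 : ℝ) ∈ Icc (-T) T := ⟨by linarith, le_of_lt hT0⟩
    have := hmax h0mem
    simpa using this
  refine ⟨B, hB0, fun s => ⟨?_, hFnn s⟩⟩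
  by_cases hs : |s| ≤ T
  · have hsmem : s ∈ Icc (-T) T := abs_le.mp hs
    have hle : f s * s ≤ B := hmax hsmem
    linarith [h2F s, hfsnn s]
  · push_neg at hs
    have hst₀ : t₀ ≤ |s| := le_trans (le_max_left _ _) (le_of_lt hs)
    have hs4M : 4 * M ≤ |s| := le_trans (le_max_right _ _) (le_of_lt hs)
    have hFle : primF f s ≤ M * |f s| := (hi s hst₀).2
    have habs : |f s| * |s| = f s * s := by
      rw [← abs_mul]; exact abs_of_nonneg (hfsnn s)
    have h4M : 4 * (M * |f s|) ≤ f s * s := by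
      have := mul_le_mul_of_nonneg_left hs4M (abs_nonneg (f s))
      nlinarith [abs_nonneg (f s)]
    linarith

/-- Palais–Smale sequences are bounded in `X`. -/
theorem statement16 (ω : ℝ) (hω0 : 0 < ω) (hωπ : ω ≤ π) (hTM : TMprop ω)
    (f : ℝ → ℝ) (hf : HypH f)
    (u : ℕ → ℝ → ℝ) (huX : ∀ n, memX (u n)) (c : ℝ)
    (hphi : Filter.Tendsto (fun n => phi f (u n)) Filter.atTop (𝓝 c))
    (hderiv : ∃ ε : ℕ → ℝ, Filter.Tendsto ε Filter.atTop (𝓝 0) ∧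
      ∀ n, ∀ v : ℝ → ℝ, memX v → gagNorm v ≤ 1 → |phiDeriv f (u n) v| ≤ ε n) :
    ∃ C : ℝ, ∀ n, gagNorm (u n) ≤ C := by
  obtain ⟨hfc, hf0, ⟨t₀, ht₀, M, hM, hi⟩, hii, _hiii, _hiv⟩ := hf
  obtain ⟨ε, hε, hd⟩ := hderiv
  obtain ⟨B, hB0, hkey⟩ := key_pointwise f hfc t₀ M ht₀ hM hi hii
  have hπ : (0 : ℝ) < π := Real.pi_pos
  have h2π : (0 : ℝ) < 2 * π := by linarith
  -- uniform bounds on ε and φ(uₙ)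
  obtain ⟨E, hE⟩ : ∃ E : ℝ, ∀ n, |ε n| ≤ E := by
    obtain ⟨E, hE⟩ := hε.abs.bddAbove_range
    exact ⟨E, fun n => hE (Set.mem_range_self n)⟩
  obtain ⟨Φ, hΦ⟩ : ∃ Φ : ℝ, ∀ n, |phi f (u n)| ≤ Φ := by
    obtain ⟨Φ, hΦ⟩ := hphi.abs.bddAbove_range
    exact ⟨Φ, fun n => hΦ (Set.mem_range_self n)⟩
  have hE0 : 0 ≤ E := le_trans (abs_nonneg _) (hE 0)
  have hΦ0 : 0 ≤ Φ := le_trans (abs_nonneg _) (hΦ 0)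
  set A : ℝ := 2 * π * E with hA
  set D : ℝ := 2 * π * (B + 4 * Φ) with hD
  have hA0 : 0 ≤ A := by positivity
  have hD0 : 0 ≤ D := by positivity
  refine ⟨max 1 (A + D), fun n => ?_⟩
  set t : ℝ := gagNorm (u n) with htdef
  have ht0 : 0 ≤ t := Real.sqrt_nonneg _
  obtain ⟨⟨hum, hu2, hugag⟩, hu0⟩ := huX n
  have hgnn : 0 ≤ gagSq (u n) := by
    apply integral_nonneg
    intro p
    exact div_nonneg (sq_nonneg _) (sq_nonneg _)
  have ht2 : t ^ 2 = gagSq (u n) := Real.sq_sqrt hgnn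
  by_cases htz : t = 0
  · rw [htz]; exact le_trans zero_le_one (le_max_left _ _)
  have htpos : 0 < t := lt_of_le_of_ne ht0 (Ne.symm htz)
  -- the normalized test function
  set v : ℝ → ℝ := fun x => t⁻¹ * u n x with hv
  have hgagv : ∀ p : ℝ × ℝ, gagKer v p = t⁻¹ ^ 2 * gagKer (u n) p := by
    intro p; simp only [gagKer, hv]; ring
  have hinnv : ∀ p : ℝ × ℝ, innerKer (u n) v p = t⁻¹ * gagKer (u n) p := by
    intro p; simp only [innerKer, gagKer, hv]; ring
  have hvX : memX v := by
    refine ⟨⟨measurable_const.mul hum, ?_, ?_⟩, ?_⟩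
    · have : (fun x => (v x) ^ 2) = fun x => t⁻¹ ^ 2 * (u n x) ^ 2 := by
        funext x; simp only [hv]; ring
      rw [this]; exact hu2.const_mul _
    · have : gagKer v = fun p => t⁻¹ ^ 2 * gagKer (u n) p := funext hgagv
      rw [this]; exact hugag.const_mul _
    · filter_upwards [hu0] with x hx hxm
      simp only [hv, hx hxm, mul_zero]
  have hgsv : gagSq v = t⁻¹ ^ 2 * gagSq (u n) := by
    unfold gagSq
    rw [show gagKer v = fun p => t⁻¹ ^ 2 * gagKer (u n) p from funext hgagv]
    exact integral_const_mul _ _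
  have hvnorm : gagNorm v = 1 := by
    unfold gagNorm
    rw [hgsv, ← ht2]
    rw [show t⁻¹ ^ 2 * t ^ 2 = (1 : ℝ) by field_simp]
    exact Real.sqrt_one
  set J : ℝ := ∫ x in Ioo (0 : ℝ) 1, f (u n x) * u n x with hJdef
  have hinner : innerX (u n) v = t⁻¹ * gagSq (u n) := by
    unfold innerX gagSq
    rw [show innerKer (u n) v = fun p => t⁻¹ * gagKer (u n) p from funext hinnv]
    exact integral_const_mul _ _
  have hint2 : (∫ x in Ioo (0 : ℝ) 1, f (u n x) * v x) = t⁻¹ * J := by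
    have h1 : ∀ x, f (u n x) * v x = t⁻¹ * (f (u n x) * u n x) := by
      intro x; simp only [hv]; ring
    calc (∫ x in Ioo (0 : ℝ) 1, f (u n x) * v x)
        = ∫ x in Ioo (0 : ℝ) 1, t⁻¹ * (f (u n x) * u n x) := by simp only [h1]
      _ = t⁻¹ * J := integral_const_mul _ _
  have hPD : phiDeriv f (u n) v = t⁻¹ * (gagSq (u n) / (2 * π) - J) := by
    unfold phiDeriv
    rw [hinner, hint2]; ring
  have hder := hd n v hvX (le_of_eq hvnorm)
  rw [hPD, abs_mul, abs_inv, abs_of_pos htpos] at hder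
  have habs : |gagSq (u n) / (2 * π) - J| ≤ t * ε n := by
    have h := mul_le_mul_of_nonneg_left hder (le_of_lt htpos)
    rwa [← mul_assoc, mul_inv_cancel₀ htz, one_mul] at h
  have hK : (∫ x in Ioo (0 : ℝ) 1, primF f (u n x)) = gagSq (u n) / (4 * π) - phi f (u n) := by
    unfold phi; ring
  have hεE : ε n ≤ E := le_trans (le_abs_self _) (hE n)
  by_cases hInt : IntegrableOn (fun x => f (u n x) * u n x) (Ioo (0 : ℝ) 1)
  · -- integrable case
    have hgint : IntegrableOn (fun x => f (u n x) * u n x + B) (Ioo (0 : ℝ) 1) :=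
      hInt.add ((integrableOn_const_iff).mpr (Or.inr (by simp [Real.volume_Ioo])))
    have hFmeas : Measurable fun x => primF f (u n x) := by
      have hFc : Continuous (primF f) := by
        apply intervalIntegral.continuous_primitive
        intro a b
        exact hfc.intervalIntegrable a b
      exact hFc.measurable.comp hum
    have hFint : IntegrableOn (fun x => 4 * primF f (u n x)) (Ioo (0 : ℝ) 1) := by
      apply Integrable.mono' hgint
      · exact ((measurable_const.mul hFmeas).aestronglyMeasurable)
      · apply Eventually.of_forall
        intro x
        have h1 := (hkey (u n x)).1
        have h2 := (hkey (u n x)).2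
        rw [Real.norm_eq_abs, abs_of_nonneg (by linarith)]
        exact h1
    have hmono : (∫ x in Ioo (0 : ℝ) 1, 4 * primF f (u n x))
        ≤ ∫ x in Ioo (0 : ℝ) 1, (f (u n x) * u n x + B) := by
      apply integral_mono hFint hgint
      intro x
      exact (hkey (u n x)).1
    have hlhs : (∫ x in Ioo (0 : ℝ) 1, 4 * primF f (u n x))
        = 4 * (gagSq (u n) / (4 * π) - phi f (u n)) := by
      rw [integral_const_mul, hK]
    have hrhs : (∫ x in Ioo (0 : ℝ) 1, (f (u n x) * u n x + B)) = J + B := by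
      rw [integral_add hInt ((integrableOn_const_iff).mpr (Or.inr (by simp [Real.volume_Ioo])))]
      rw [setIntegral_const]
      simp [Real.volume_Ioo, hJdef]
    rw [hlhs, hrhs] at hmono
    have hJle : J ≤ gagSq (u n) / (2 * π) + t * ε n := by
      have := (abs_le.mp habs).1
      linarith
    have hφle : phi f (u n) ≤ Φ := le_trans (le_abs_self _) (hΦ n)
    -- clear denominators
    rw [← ht2] at hmono hJle
    have ha : 4 * (t ^ 2 / (4 * π) - phi f (u n))
        = t ^ 2 / π - 4 * phi f (u n) := by field_simp
    have hb : t ^ 2 / π - t ^ 2 / (2 * π) = t ^ 2 / (2 * π) := by field_simp; ring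
    have hc : t ^ 2 / (2 * π) ≤ t * ε n + B + 4 * phi f (u n) := by
      rw [ha] at hmono; linarith
    have hd2 : t ^ 2 ≤ (t * ε n + B + 4 * phi f (u n)) * (2 * π) :=
      (div_le_iff₀ h2π).mp hc
    have htE : t * ε n ≤ t * E := mul_le_mul_of_nonneg_left hεE ht0
    have hfinal : t ^ 2 ≤ A * t + D := by
      have h1 : t * ε n + B + 4 * phi f (u n) ≤ t * E + B + 4 * Φ := by linarith
      have h2 : (t * ε n + B + 4 * phi f (u n)) * (2 * π)
          ≤ (t * E + B + 4 * Φ) * (2 * π) := mul_le_mul_of_nonneg_right h1 (le_of_lt h2π)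
      have h3 : (t * E + B + 4 * Φ) * (2 * π) = A * t + D := by rw [hA, hD]; ring
      linarith
    by_cases h1t : t ≤ 1
    · exact le_trans h1t (le_max_left _ _)
    · push_neg at h1t
      have hDt : D ≤ D * t := le_mul_of_one_le_right hD0 (le_of_lt h1t)
      have hsq : t ^ 2 = t * t := pow_two t
      have heq : (A + D) * t = A * t + D * t := by ring
      have h4 : t * t ≤ (A + D) * t := by linarith
      have : t ≤ A + D := le_of_mul_le_mul_right h4 htpos
      exact le_trans this (le_max_right _ _)
  · -- non-integrable case : J = 0
    have hJ0 : J = 0 := integral_undef hInt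
    rw [hJ0, sub_zero] at habs
    have hnn : 0 ≤ gagSq (u n) / (2 * π) := by positivity
    rw [abs_of_nonneg hnn, ← ht2] at habs
    have hta : t ≤ 2 * π * ε n := by
      have h5 := (div_le_iff₀ h2π).mp habs
      have hsq : t ^ 2 = t * t := pow_two t
      have heq : t * ε n * (2 * π) = (2 * π * ε n) * t := by ring
      have h6 : t * t ≤ (2 * π * ε n) * t := by linarith
      exact le_of_mul_le_mul_right h6 htpos
    have hle : t ≤ A := by
      rw [hA]
      calc t ≤ 2 * π * ε n := hta
        _ ≤ 2 * π * E := mul_le_mul_of_nonneg_left hεE (le_of_lt h2π)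
    have : t ≤ A + D := by linarith
    exact le_trans this (le_max_right _ _)
end
end
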